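/- arXiv:1207.5005 — 2 statements merged into one kernel-verified Lean document; each statement's English description precedes it below -/
import Mathlib

section
/- The set of the 24 Hurwitz units {±1, ±i, ±j, ±k, (±1±i±j±k)/2} is a subgroup of the unit group ℍˣ of the real quaternions, and this group — the binary tetrahedral group 2T, i.e. the group of 24 rotors generated by the reflections of A₃ — is isomorphic as a group to SL(2, ℤ/3ℤ). -/
noncomputable section

/-- The quaternion unit `i`. -/
def qi : Quaternion ℝ := ⟨0, 1, 0, 0⟩
/-- The quaternion unit `j`. -/
def qj : Quaternion ℝ := ⟨0, 0, 1, 0⟩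
/-- The quaternion unit `k`. -/
def qk : Quaternion ℝ := ⟨0, 0, 0, 1⟩

/-- The sign set `{1, -1}`. -/
def pm : Set ℝ := {1, -1}

/-- The 24 Hurwitz units `±1, ±i, ±j, ±k, (±1±i±j±k)/2`. -/
def hurwitzUnits : Set (Quaternion ℝ) :=
  {1, -1, qi, -qi, qj, -qj, qk, -qk} ∪
  {x | ∃ ε₀ ∈ pm, ∃ ε₁ ∈ pm, ∃ ε₂ ∈ pm, ∃ ε₃ ∈ pm,
    x = (2 : ℝ)⁻¹ • (ε₀ • (1 : Quaternion ℝ) + ε₁ • qi + ε₂ • qj + ε₃ • qk)}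

instance : DecidableEq (Quaternion ℤ) := fun a b =>
  decidable_of_iff (a.re = b.re ∧ a.imI = b.imI ∧ a.imJ = b.imJ ∧ a.imK = b.imK)
    QuaternionAlgebra.ext_iff.symm

/-- Doubled Hurwitz units as integer quaternions. -/
def dQ : Fin 24 → Quaternion ℤ := ![
  ⟨2, 0, 0, 0⟩,
  ⟨-2, 0, 0, 0⟩,
  ⟨0, 2, 0, 0⟩,
  ⟨0, -2, 0, 0⟩,
  ⟨0, 0, 2, 0⟩,
  ⟨0, 0, -2, 0⟩,
  ⟨0, 0, 0, 2⟩,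
  ⟨0, 0, 0, -2⟩,
  ⟨1, 1, 1, 1⟩,
  ⟨1, 1, 1, -1⟩,
  ⟨1, 1, -1, 1⟩,
  ⟨1, 1, -1, -1⟩,
  ⟨1, -1, 1, 1⟩,
  ⟨1, -1, 1, -1⟩,
  ⟨1, -1, -1, 1⟩,
  ⟨1, -1, -1, -1⟩,
  ⟨-1, 1, 1, 1⟩,
  ⟨-1, 1, 1, -1⟩,
  ⟨-1, 1, -1, 1⟩,
  ⟨-1, 1, -1, -1⟩,
  ⟨-1, -1, 1, 1⟩,
  ⟨-1, -1, 1, -1⟩,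
  ⟨-1, -1, -1, 1⟩,
  ⟨-1, -1, -1, -1⟩
]

/-- Multiplication table of the 24 Hurwitz units. -/
def tbl : Fin 24 → Fin 24 → Fin 24 := ![
  ![0, 1, 2, 3, 4, 5, 6, 7, 8, 9, 10, 11, 12, 13, 14, 15, 16, 17, 18, 19, 20, 21, 22, 23],
  ![1, 0, 3, 2, 5, 4, 7, 6, 23, 22, 21, 20, 19, 18, 17, 16, 15, 14, 13, 12, 11, 10, 9, 8],
  ![2, 3, 1, 0, 6, 7, 5, 4, 18, 16, 19, 17, 10, 8, 11, 9, 22, 20, 23, 21, 14, 12, 15, 13],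
  ![3, 2, 0, 1, 7, 6, 4, 5, 13, 15, 12, 14, 21, 23, 20, 22, 9, 11, 8, 10, 17, 19, 16, 18],
  ![4, 5, 7, 6, 1, 0, 2, 3, 17, 21, 9, 13, 16, 20, 8, 12, 19, 23, 11, 15, 18, 22, 10, 14],
  ![5, 4, 6, 7, 0, 1, 3, 2, 14, 10, 22, 18, 15, 11, 23, 19, 12, 8, 20, 16, 13, 9, 21, 17],
  ![6, 7, 4, 5, 3, 2, 1, 0, 20, 12, 16, 8, 22, 14, 18, 10, 21, 13, 17, 9, 23, 15, 19, 11],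
  ![7, 6, 5, 4, 2, 3, 0, 1, 11, 19, 15, 23, 9, 17, 13, 21, 10, 18, 14, 22, 8, 16, 12, 20],
  ![8, 23, 17, 14, 20, 11, 18, 13, 16, 4, 2, 9, 6, 12, 10, 0, 1, 21, 19, 7, 22, 3, 5, 15],
  ![9, 22, 19, 12, 16, 15, 10, 21, 2, 17, 11, 7, 8, 4, 0, 13, 18, 1, 5, 23, 6, 20, 14, 3],
  ![10, 21, 16, 15, 12, 19, 22, 9, 6, 8, 18, 2, 14, 0, 5, 11, 20, 4, 1, 17, 3, 13, 23, 7],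
  ![11, 20, 18, 13, 8, 23, 14, 17, 10, 2, 5, 19, 0, 9, 15, 7, 6, 16, 22, 1, 12, 4, 3, 21],
  ![12, 19, 9, 22, 21, 10, 16, 15, 4, 13, 8, 0, 20, 3, 6, 14, 17, 7, 2, 11, 1, 23, 18, 5],
  ![13, 18, 11, 20, 17, 14, 8, 23, 9, 7, 0, 15, 4, 21, 12, 3, 2, 19, 10, 5, 16, 1, 6, 22],
  ![14, 17, 8, 23, 13, 18, 20, 11, 12, 0, 6, 10, 3, 15, 22, 5, 4, 9, 16, 2, 21, 7, 1, 19],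
  ![15, 16, 10, 21, 9, 22, 12, 19, 0, 11, 14, 5, 13, 7, 3, 23, 8, 2, 6, 18, 4, 17, 20, 1],
  ![16, 15, 21, 10, 22, 9, 19, 12, 1, 20, 17, 4, 18, 6, 2, 8, 23, 3, 7, 13, 5, 14, 11, 0],
  ![17, 14, 23, 8, 18, 13, 11, 20, 19, 1, 7, 21, 2, 16, 9, 4, 5, 22, 15, 3, 10, 6, 0, 12],
  ![18, 13, 20, 11, 14, 17, 23, 8, 22, 6, 1, 16, 5, 10, 19, 2, 3, 12, 21, 4, 15, 0, 7, 9],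
  ![19, 12, 22, 9, 10, 21, 15, 16, 5, 18, 23, 1, 11, 2, 7, 17, 14, 6, 3, 20, 0, 8, 13, 4],
  ![20, 11, 13, 18, 23, 8, 17, 14, 21, 3, 4, 12, 1, 22, 16, 6, 7, 15, 9, 0, 19, 5, 2, 10],
  ![21, 10, 15, 16, 19, 12, 9, 22, 7, 23, 13, 3, 17, 1, 4, 20, 11, 5, 0, 14, 2, 18, 8, 6],
  ![22, 9, 12, 19, 15, 16, 21, 10, 3, 14, 20, 6, 23, 5, 1, 18, 13, 0, 4, 8, 7, 11, 17, 2],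
  ![23, 8, 14, 17, 11, 20, 13, 18, 15, 5, 3, 22, 7, 19, 21, 1, 0, 10, 12, 6, 9, 2, 4, 16]
]

/-- Index of the inverse. -/
def invIdx : Fin 24 → Fin 24 := ![0, 1, 3, 2, 5, 4, 7, 6, 15, 14, 13, 12, 11, 10, 9, 8, 23, 22, 21, 20, 19, 18, 17, 16]

/-- The corresponding matrices in SL(2, ZMod 3). -/
def gM : Fin 24 → Matrix (Fin 2) (Fin 2) (ZMod 3) := ![
  !![1, 0; 0, 1],
  !![2, 0; 0, 2],
  !![0, 2; 1, 0],
  !![0, 1; 2, 0],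
  !![1, 1; 1, 2],
  !![2, 2; 2, 1],
  !![2, 1; 1, 1],
  !![1, 2; 2, 2],
  !![2, 2; 0, 2],
  !![0, 1; 2, 1],
  !![1, 1; 2, 0],
  !![2, 0; 1, 2],
  !![2, 0; 2, 2],
  !![0, 2; 1, 1],
  !![1, 2; 1, 0],
  !![2, 1; 0, 2],
  !![1, 2; 0, 1],
  !![2, 1; 2, 0],
  !![0, 1; 2, 2],
  !![1, 0; 1, 1],
  !![1, 0; 2, 1],
  !![2, 2; 1, 0],
  !![0, 2; 1, 2],
  !![1, 1; 0, 1]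
]

set_option maxRecDepth 40000 in
theorem dQ_mul : ∀ a b, dQ a * dQ b = dQ (tbl a b) + dQ (tbl a b) := by decide
theorem dQ_inj : Function.Injective dQ := by decide
theorem inv_tbl : ∀ a, tbl a (invIdx a) = 0 ∧ tbl (invIdx a) a = 0 := by decide
set_option maxRecDepth 40000 in
theorem gM_mul : ∀ a b, gM a * gM b = gM (tbl a b) := by decide
theorem gM_inj : Function.Injective gM := by decide
theorem gM_det : ∀ a, gM a 0 0 * gM a 1 1 - gM a 0 1 * gM a 1 0 = 1 := by decide
theorem gM_one : gM 0 = 1 := by decide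
set_option maxRecDepth 40000 in
theorem gM_surj : ∀ M : Matrix (Fin 2) (Fin 2) (ZMod 3),
    M 0 0 * M 1 1 - M 0 1 * M 1 0 = 1 → ∃ a, gM a = M := by decide

open Quaternion

/-- Coercion of integer quaternions into real quaternions, as a ring hom. -/
def ψ : Quaternion ℤ →+* Quaternion ℝ where
  toFun x := (⟨(x.re : ℝ), (x.imI : ℝ), (x.imJ : ℝ), (x.imK : ℝ)⟩ : Quaternion ℝ)
  map_one' := by ext <;> simp
  map_mul' x y := by
    change (⟨((x*y).re : ℝ), ((x*y).imI : ℝ), ((x*y).imJ : ℝ), ((x*y).imK : ℝ)⟩ : ℍ[ℝ]) = (⟨(x.re:ℝ), x.imI, x.imJ, x.imK⟩ : ℍ[ℝ]) * ⟨(y.re:ℝ), y.imI, y.imJ, y.imK⟩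
    ext <;>
      simp [Quaternion.re_mul, Quaternion.imI_mul, Quaternion.imJ_mul, Quaternion.imK_mul] <;>
      push_cast <;> ring
  map_zero' := by ext <;> simp
  map_add' x y := by ext <;> simp <;> rfl

@[simp] theorem ψ_apply (x : Quaternion ℤ) :
    ψ x = (⟨(x.re : ℝ), (x.imI : ℝ), (x.imJ : ℝ), (x.imK : ℝ)⟩ : Quaternion ℝ) := rfl

theorem ψ_inj : Function.Injective ψ := by
  intro x y h
  have h' := QuaternionAlgebra.ext_iff.mp h
  have h1 : ((x.re : ℝ)) = (y.re : ℝ) := h'.1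
  have h2 : ((x.imI : ℝ)) = (y.imI : ℝ) := h'.2.1
  have h3 : ((x.imJ : ℝ)) = (y.imJ : ℝ) := h'.2.2.1
  have h4 : ((x.imK : ℝ)) = (y.imK : ℝ) := h'.2.2.2
  exact QuaternionAlgebra.ext (by exact_mod_cast h1) (by exact_mod_cast h2)
    (by exact_mod_cast h3) (by exact_mod_cast h4)

/-- The 24 Hurwitz units as real quaternions. -/
def E (a : Fin 24) : Quaternion ℝ := (2 : ℝ)⁻¹ • ψ (dQ a)

theorem E_mul (a b : Fin 24) : E a * E b = E (tbl a b) := by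
  have h : ψ (dQ a) * ψ (dQ b) = ψ (dQ (tbl a b)) + ψ (dQ (tbl a b)) := by
    rw [← map_mul, dQ_mul a b, map_add]
  simp only [E, smul_mul_assoc, mul_smul_comm, h]
  rw [← two_smul ℝ (ψ (dQ (tbl a b))), smul_smul, smul_smul]
  norm_num

theorem E_inj : Function.Injective E := by
  intro a b h
  simp only [E] at h
  exact dQ_inj (ψ_inj (smul_right_injective (Quaternion ℝ) (by norm_num : (2:ℝ)⁻¹ ≠ 0) h))

theorem EE (a : Fin 24) :
    E a = (2 : ℝ)⁻¹ • (((dQ a).re : ℝ) • (1 : Quaternion ℝ) + ((dQ a).imI : ℝ) • qi +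
      ((dQ a).imJ : ℝ) • qj + ((dQ a).imK : ℝ) • qk) := by
  ext <;> simp only [E, Quaternion.re_smul, Quaternion.imI_smul, Quaternion.imJ_smul, Quaternion.imK_smul, Quaternion.re_add, Quaternion.imI_add, Quaternion.imJ_add, Quaternion.imK_add] <;> simp [qi, qj, qk] <;> ring

theorem hpm1 : (1 : ℝ) ∈ pm := Or.inl rfl
theorem hpmneg : (-1 : ℝ) ∈ pm := Or.inr rfl

theorem hE0 : E (0 : Fin 24) = (1 : Quaternion ℝ) := by
  have h : dQ (0 : Fin 24) = (⟨2, 0, 0, 0⟩ : Quaternion ℤ) := rfl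
  rw [EE, h]; ext <;> norm_num <;> norm_num [qi, qj, qk]

theorem hE1 : E (1 : Fin 24) = (-1 : Quaternion ℝ) := by
  have h : dQ (1 : Fin 24) = (⟨-2, 0, 0, 0⟩ : Quaternion ℤ) := rfl
  rw [EE, h]; ext <;> norm_num <;> norm_num [qi, qj, qk]

theorem hE2 : E (2 : Fin 24) = (qi : Quaternion ℝ) := by
  have h : dQ (2 : Fin 24) = (⟨0, 2, 0, 0⟩ : Quaternion ℤ) := rfl
  rw [EE, h]; ext <;> norm_num <;> norm_num [qi, qj, qk]

theorem hE3 : E (3 : Fin 24) = (-qi : Quaternion ℝ) := by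
  have h : dQ (3 : Fin 24) = (⟨0, -2, 0, 0⟩ : Quaternion ℤ) := rfl
  rw [EE, h]; ext <;> norm_num <;> norm_num [qi, qj, qk]

theorem hE4 : E (4 : Fin 24) = (qj : Quaternion ℝ) := by
  have h : dQ (4 : Fin 24) = (⟨0, 0, 2, 0⟩ : Quaternion ℤ) := rfl
  rw [EE, h]; ext <;> norm_num <;> norm_num [qi, qj, qk]

theorem hE5 : E (5 : Fin 24) = (-qj : Quaternion ℝ) := by
  have h : dQ (5 : Fin 24) = (⟨0, 0, -2, 0⟩ : Quaternion ℤ) := rfl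
  rw [EE, h]; ext <;> norm_num <;> norm_num [qi, qj, qk]

theorem hE6 : E (6 : Fin 24) = (qk : Quaternion ℝ) := by
  have h : dQ (6 : Fin 24) = (⟨0, 0, 0, 2⟩ : Quaternion ℤ) := rfl
  rw [EE, h]; ext <;> norm_num <;> norm_num [qi, qj, qk]

theorem hE7 : E (7 : Fin 24) = (-qk : Quaternion ℝ) := by
  have h : dQ (7 : Fin 24) = (⟨0, 0, 0, -2⟩ : Quaternion ℤ) := rfl
  rw [EE, h]; ext <;> norm_num <;> norm_num [qi, qj, qk]

theorem hE8 : E (8 : Fin 24) = (2 : ℝ)⁻¹ • ((1 : ℝ) • (1 : Quaternion ℝ) + (1 : ℝ) • qi + (1 : ℝ) • qj + (1 : ℝ) • qk) := by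
  have h : dQ (8 : Fin 24) = (⟨1, 1, 1, 1⟩ : Quaternion ℤ) := rfl
  rw [EE, h]; ext <;> norm_num <;> norm_num [qi, qj, qk]

theorem hE9 : E (9 : Fin 24) = (2 : ℝ)⁻¹ • ((1 : ℝ) • (1 : Quaternion ℝ) + (1 : ℝ) • qi + (1 : ℝ) • qj + (-1 : ℝ) • qk) := by
  have h : dQ (9 : Fin 24) = (⟨1, 1, 1, -1⟩ : Quaternion ℤ) := rfl
  rw [EE, h]; ext <;> norm_num <;> norm_num [qi, qj, qk]

theorem hE10 : E (10 : Fin 24) = (2 : ℝ)⁻¹ • ((1 : ℝ) • (1 : Quaternion ℝ) + (1 : ℝ) • qi + (-1 : ℝ) • qj + (1 : ℝ) • qk) := by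
  have h : dQ (10 : Fin 24) = (⟨1, 1, -1, 1⟩ : Quaternion ℤ) := rfl
  rw [EE, h]; ext <;> norm_num <;> norm_num [qi, qj, qk]

theorem hE11 : E (11 : Fin 24) = (2 : ℝ)⁻¹ • ((1 : ℝ) • (1 : Quaternion ℝ) + (1 : ℝ) • qi + (-1 : ℝ) • qj + (-1 : ℝ) • qk) := by
  have h : dQ (11 : Fin 24) = (⟨1, 1, -1, -1⟩ : Quaternion ℤ) := rfl
  rw [EE, h]; ext <;> norm_num <;> norm_num [qi, qj, qk]

theorem hE12 : E (12 : Fin 24) = (2 : ℝ)⁻¹ • ((1 : ℝ) • (1 : Quaternion ℝ) + (-1 : ℝ) • qi + (1 : ℝ) • qj + (1 : ℝ) • qk) := by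
  have h : dQ (12 : Fin 24) = (⟨1, -1, 1, 1⟩ : Quaternion ℤ) := rfl
  rw [EE, h]; ext <;> norm_num <;> norm_num [qi, qj, qk]

theorem hE13 : E (13 : Fin 24) = (2 : ℝ)⁻¹ • ((1 : ℝ) • (1 : Quaternion ℝ) + (-1 : ℝ) • qi + (1 : ℝ) • qj + (-1 : ℝ) • qk) := by
  have h : dQ (13 : Fin 24) = (⟨1, -1, 1, -1⟩ : Quaternion ℤ) := rfl
  rw [EE, h]; ext <;> norm_num <;> norm_num [qi, qj, qk]

theorem hE14 : E (14 : Fin 24) = (2 : ℝ)⁻¹ • ((1 : ℝ) • (1 : Quaternion ℝ) + (-1 : ℝ) • qi + (-1 : ℝ) • qj + (1 : ℝ) • qk) := by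
  have h : dQ (14 : Fin 24) = (⟨1, -1, -1, 1⟩ : Quaternion ℤ) := rfl
  rw [EE, h]; ext <;> norm_num <;> norm_num [qi, qj, qk]

theorem hE15 : E (15 : Fin 24) = (2 : ℝ)⁻¹ • ((1 : ℝ) • (1 : Quaternion ℝ) + (-1 : ℝ) • qi + (-1 : ℝ) • qj + (-1 : ℝ) • qk) := by
  have h : dQ (15 : Fin 24) = (⟨1, -1, -1, -1⟩ : Quaternion ℤ) := rfl
  rw [EE, h]; ext <;> norm_num <;> norm_num [qi, qj, qk]

theorem hE16 : E (16 : Fin 24) = (2 : ℝ)⁻¹ • ((-1 : ℝ) • (1 : Quaternion ℝ) + (1 : ℝ) • qi + (1 : ℝ) • qj + (1 : ℝ) • qk) := by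
  have h : dQ (16 : Fin 24) = (⟨-1, 1, 1, 1⟩ : Quaternion ℤ) := rfl
  rw [EE, h]; ext <;> norm_num <;> norm_num [qi, qj, qk]

theorem hE17 : E (17 : Fin 24) = (2 : ℝ)⁻¹ • ((-1 : ℝ) • (1 : Quaternion ℝ) + (1 : ℝ) • qi + (1 : ℝ) • qj + (-1 : ℝ) • qk) := by
  have h : dQ (17 : Fin 24) = (⟨-1, 1, 1, -1⟩ : Quaternion ℤ) := rfl
  rw [EE, h]; ext <;> norm_num <;> norm_num [qi, qj, qk]

theorem hE18 : E (18 : Fin 24) = (2 : ℝ)⁻¹ • ((-1 : ℝ) • (1 : Quaternion ℝ) + (1 : ℝ) • qi + (-1 : ℝ) • qj + (1 : ℝ) • qk) := by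
  have h : dQ (18 : Fin 24) = (⟨-1, 1, -1, 1⟩ : Quaternion ℤ) := rfl
  rw [EE, h]; ext <;> norm_num <;> norm_num [qi, qj, qk]

theorem hE19 : E (19 : Fin 24) = (2 : ℝ)⁻¹ • ((-1 : ℝ) • (1 : Quaternion ℝ) + (1 : ℝ) • qi + (-1 : ℝ) • qj + (-1 : ℝ) • qk) := by
  have h : dQ (19 : Fin 24) = (⟨-1, 1, -1, -1⟩ : Quaternion ℤ) := rfl
  rw [EE, h]; ext <;> norm_num <;> norm_num [qi, qj, qk]

theorem hE20 : E (20 : Fin 24) = (2 : ℝ)⁻¹ • ((-1 : ℝ) • (1 : Quaternion ℝ) + (-1 : ℝ) • qi + (1 : ℝ) • qj + (1 : ℝ) • qk) := by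
  have h : dQ (20 : Fin 24) = (⟨-1, -1, 1, 1⟩ : Quaternion ℤ) := rfl
  rw [EE, h]; ext <;> norm_num <;> norm_num [qi, qj, qk]

theorem hE21 : E (21 : Fin 24) = (2 : ℝ)⁻¹ • ((-1 : ℝ) • (1 : Quaternion ℝ) + (-1 : ℝ) • qi + (1 : ℝ) • qj + (-1 : ℝ) • qk) := by
  have h : dQ (21 : Fin 24) = (⟨-1, -1, 1, -1⟩ : Quaternion ℤ) := rfl
  rw [EE, h]; ext <;> norm_num <;> norm_num [qi, qj, qk]

theorem hE22 : E (22 : Fin 24) = (2 : ℝ)⁻¹ • ((-1 : ℝ) • (1 : Quaternion ℝ) + (-1 : ℝ) • qi + (-1 : ℝ) • qj + (1 : ℝ) • qk) := by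
  have h : dQ (22 : Fin 24) = (⟨-1, -1, -1, 1⟩ : Quaternion ℤ) := rfl
  rw [EE, h]; ext <;> norm_num <;> norm_num [qi, qj, qk]

theorem hE23 : E (23 : Fin 24) = (2 : ℝ)⁻¹ • ((-1 : ℝ) • (1 : Quaternion ℝ) + (-1 : ℝ) • qi + (-1 : ℝ) • qj + (-1 : ℝ) • qk) := by
  have h : dQ (23 : Fin 24) = (⟨-1, -1, -1, -1⟩ : Quaternion ℤ) := rfl
  rw [EE, h]; ext <;> norm_num <;> norm_num [qi, qj, qk]

theorem E_mem_hurwitz : ∀ a : Fin 24, E a ∈ hurwitzUnits := by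
  intro a
  rcases (by decide : ∀ a : Fin 24, a = 0 ∨ a = 1 ∨ a = 2 ∨ a = 3 ∨ a = 4 ∨ a = 5 ∨ a = 6 ∨ a = 7 ∨ a = 8 ∨ a = 9 ∨ a = 10 ∨ a = 11 ∨ a = 12 ∨ a = 13 ∨ a = 14 ∨ a = 15 ∨ a = 16 ∨ a = 17 ∨ a = 18 ∨ a = 19 ∨ a = 20 ∨ a = 21 ∨ a = 22 ∨ a = 23) a with rfl|rfl|rfl|rfl|rfl|rfl|rfl|rfl|rfl|rfl|rfl|rfl|rfl|rfl|rfl|rfl|rfl|rfl|rfl|rfl|rfl|rfl|rfl|rfl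
  · exact Or.inl (Or.inl hE0)
  · exact Or.inl (Or.inr (Or.inl hE1))
  · exact Or.inl (Or.inr (Or.inr (Or.inl hE2)))
  · exact Or.inl (Or.inr (Or.inr (Or.inr (Or.inl hE3))))
  · exact Or.inl (Or.inr (Or.inr (Or.inr (Or.inr (Or.inl hE4)))))
  · exact Or.inl (Or.inr (Or.inr (Or.inr (Or.inr (Or.inr (Or.inl hE5))))))
  · exact Or.inl (Or.inr (Or.inr (Or.inr (Or.inr (Or.inr (Or.inr (Or.inl hE6)))))))
  · exact Or.inl (Or.inr (Or.inr (Or.inr (Or.inr (Or.inr (Or.inr (Or.inr (hE7))))))))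
  · exact Or.inr ⟨1, hpm1, 1, hpm1, 1, hpm1, 1, hpm1, hE8⟩
  · exact Or.inr ⟨1, hpm1, 1, hpm1, 1, hpm1, -1, hpmneg, hE9⟩
  · exact Or.inr ⟨1, hpm1, 1, hpm1, -1, hpmneg, 1, hpm1, hE10⟩
  · exact Or.inr ⟨1, hpm1, 1, hpm1, -1, hpmneg, -1, hpmneg, hE11⟩
  · exact Or.inr ⟨1, hpm1, -1, hpmneg, 1, hpm1, 1, hpm1, hE12⟩
  · exact Or.inr ⟨1, hpm1, -1, hpmneg, 1, hpm1, -1, hpmneg, hE13⟩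
  · exact Or.inr ⟨1, hpm1, -1, hpmneg, -1, hpmneg, 1, hpm1, hE14⟩
  · exact Or.inr ⟨1, hpm1, -1, hpmneg, -1, hpmneg, -1, hpmneg, hE15⟩
  · exact Or.inr ⟨-1, hpmneg, 1, hpm1, 1, hpm1, 1, hpm1, hE16⟩
  · exact Or.inr ⟨-1, hpmneg, 1, hpm1, 1, hpm1, -1, hpmneg, hE17⟩
  · exact Or.inr ⟨-1, hpmneg, 1, hpm1, -1, hpmneg, 1, hpm1, hE18⟩
  · exact Or.inr ⟨-1, hpmneg, 1, hpm1, -1, hpmneg, -1, hpmneg, hE19⟩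
  · exact Or.inr ⟨-1, hpmneg, -1, hpmneg, 1, hpm1, 1, hpm1, hE20⟩
  · exact Or.inr ⟨-1, hpmneg, -1, hpmneg, 1, hpm1, -1, hpmneg, hE21⟩
  · exact Or.inr ⟨-1, hpmneg, -1, hpmneg, -1, hpmneg, 1, hpm1, hE22⟩
  · exact Or.inr ⟨-1, hpmneg, -1, hpmneg, -1, hpmneg, -1, hpmneg, hE23⟩

theorem rangeE : Set.range E = hurwitzUnits := by
  apply Set.Subset.antisymm
  · rintro x ⟨a, rfl⟩
    exact E_mem_hurwitz a
  · rintro x (h | ⟨ε₀, h₀, ε₁, h₁, ε₂, h₂, ε₃, h₃, rfl⟩)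
    · simp only [Set.mem_insert_iff, Set.mem_singleton_iff] at h
      rcases h with rfl|rfl|rfl|rfl|rfl|rfl|rfl|rfl
      · exact ⟨0, hE0⟩
      · exact ⟨1, hE1⟩
      · exact ⟨2, hE2⟩
      · exact ⟨3, hE3⟩
      · exact ⟨4, hE4⟩
      · exact ⟨5, hE5⟩
      · exact ⟨6, hE6⟩
      · exact ⟨7, hE7⟩
    · simp only [pm, Set.mem_insert_iff, Set.mem_singleton_iff] at h₀ h₁ h₂ h₃
      rcases h₀ with rfl | rfl <;> rcases h₁ with rfl | rfl <;>
        rcases h₂ with rfl | rfl <;> rcases h₃ with rfl | rfl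
      · exact ⟨8, hE8⟩
      · exact ⟨9, hE9⟩
      · exact ⟨10, hE10⟩
      · exact ⟨11, hE11⟩
      · exact ⟨12, hE12⟩
      · exact ⟨13, hE13⟩
      · exact ⟨14, hE14⟩
      · exact ⟨15, hE15⟩
      · exact ⟨16, hE16⟩
      · exact ⟨17, hE17⟩
      · exact ⟨18, hE18⟩
      · exact ⟨19, hE19⟩
      · exact ⟨20, hE20⟩
      · exact ⟨21, hE21⟩
      · exact ⟨22, hE22⟩
      · exact ⟨23, hE23⟩

theorem E_zero : E 0 = 1 := hE0

/-- The Hurwitz units as units of the real quaternions. -/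
def U (a : Fin 24) : (Quaternion ℝ)ˣ where
  val := E a
  inv := E (invIdx a)
  val_inv := by rw [E_mul, (inv_tbl a).1, E_zero]
  inv_val := by rw [E_mul, (inv_tbl a).2, E_zero]

/-- The binary tetrahedral group as a subgroup of the unit quaternions. -/
def G₀ : Subgroup (Quaternion ℝ)ˣ where
  carrier := {u | (u : Quaternion ℝ) ∈ Set.range E}
  one_mem' := ⟨0, E_zero⟩
  mul_mem' := by
    rintro u v ⟨a, ha⟩ ⟨b, hb⟩
    exact ⟨tbl a b, by rw [← E_mul, ha, hb]; rfl⟩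
  inv_mem' := by
    rintro u ⟨a, ha⟩
    refine ⟨invIdx a, ?_⟩
    have h : E (invIdx a) * (u : Quaternion ℝ) = 1 := by
      rw [← ha, E_mul, (inv_tbl a).2, E_zero]
    exact (Units.inv_eq_of_mul_eq_one_left h).symm

theorem mem_G₀ {u : (Quaternion ℝ)ˣ} : u ∈ G₀ ↔ (u : Quaternion ℝ) ∈ Set.range E := Iff.rfl

/-- The 24 elements of `SL(2, ZMod 3)`. -/
def g' (a : Fin 24) : Matrix.SpecialLinearGroup (Fin 2) (ZMod 3) :=
  ⟨gM a, by rw [Matrix.det_fin_two]; exact gM_det a⟩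

theorem g'_mul (a b : Fin 24) : g' a * g' b = g' (tbl a b) := Subtype.ext (gM_mul a b)
theorem g'_one : g' 0 = 1 := Subtype.ext gM_one
theorem g'_inj : Function.Injective g' := fun a b h =>
  gM_inj (Subtype.ext_iff.mp h)

open Classical in
/-- Index of a real quaternion among the Hurwitz units. -/
def idx (x : Quaternion ℝ) : Fin 24 :=
  if h : ∃ a, E a = x then h.choose else 0

theorem idx_E (a : Fin 24) : idx (E a) = a := by
  have h : ∃ b, E b = E a := ⟨a, rfl⟩
  rw [idx, dif_pos h]
  exact E_inj h.choose_spec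

/-- The isomorphism from the binary tetrahedral group to `SL(2, ZMod 3)`. -/
def Φ : G₀ →* Matrix.SpecialLinearGroup (Fin 2) (ZMod 3) where
  toFun u := g' (idx ((u : (Quaternion ℝ)ˣ) : Quaternion ℝ))
  map_one' := by
    show g' (idx (((1 : G₀) : (Quaternion ℝ)ˣ) : Quaternion ℝ)) = 1
    have h1 : (((1 : G₀) : (Quaternion ℝ)ˣ) : Quaternion ℝ) = E 0 := by rw [E_zero]; rfl
    rw [h1, idx_E]
    exact g'_one
  map_mul' u v := by
    obtain ⟨a, ha⟩ := u.2
    obtain ⟨b, hb⟩ := v.2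
    have h : (((u * v : G₀) : (Quaternion ℝ)ˣ) : Quaternion ℝ) = E (tbl a b) := by
      show ((u : (Quaternion ℝ)ˣ) : Quaternion ℝ) * ((v : (Quaternion ℝ)ˣ) : Quaternion ℝ)
        = E (tbl a b)
      rw [← ha, ← hb, E_mul]
    show g' (idx _) = g' (idx _) * g' (idx _)
    rw [h, ← ha, ← hb, idx_E, idx_E, idx_E, g'_mul]

theorem Φ_inj : Function.Injective Φ := by
  intro u v h
  obtain ⟨a, ha⟩ := u.2
  obtain ⟨b, hb⟩ := v.2
  have h' : g' (idx ((u : (Quaternion ℝ)ˣ) : Quaternion ℝ))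
      = g' (idx ((v : (Quaternion ℝ)ˣ) : Quaternion ℝ)) := h
  rw [← ha, ← hb, idx_E, idx_E] at h'
  have hab : a = b := g'_inj h'
  apply Subtype.ext
  apply Units.ext
  rw [← ha, ← hb, hab]

theorem Φ_surj : Function.Surjective Φ := by
  intro m
  have hm : (m : Matrix (Fin 2) (Fin 2) (ZMod 3)).det = 1 := m.2
  rw [Matrix.det_fin_two] at hm
  obtain ⟨a, hga⟩ := gM_surj _ hm
  refine ⟨⟨U a, ⟨a, rfl⟩⟩, ?_⟩
  show g' (idx (E a)) = m
  rw [idx_E]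
  exact Subtype.ext hga

/-- The set of the 24 Hurwitz units is (the underlying set of) a subgroup of
the unit group `ℍˣ`, and this group — the binary tetrahedral group `2T`, the
group of 24 rotors generated by the reflections of `A₃` — is isomorphic as a
group to `SL(2, ℤ/3ℤ)`. -/
theorem binary_tetrahedral_iso_SL2_F3 :
    ∃ G : Subgroup (Quaternion ℝ)ˣ,
      ((fun u : (Quaternion ℝ)ˣ => (u : Quaternion ℝ)) '' (G : Set (Quaternion ℝ)ˣ)
        = hurwitzUnits) ∧
      Nonempty (G ≃* Matrix.SpecialLinearGroup (Fin 2) (ZMod 3)) := by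
  refine ⟨G₀, ?_, ⟨MulEquiv.ofBijective Φ ⟨Φ_inj, Φ_surj⟩⟩⟩
  rw [← rangeE]
  apply Set.Subset.antisymm
  · rintro x ⟨u, hu, rfl⟩
    exact hu
  · rintro x ⟨a, rfl⟩
    exact ⟨U a, ⟨a, rfl⟩, rfl⟩

end
end

section
/- Let G be the subgroup of the unit group ℍˣ of the real quaternions consisting of the 48 elements given by the union of the 24 Hurwitz units with the 24 quaternions (ε a + ε' b)/√2 for two-element subsets {a,b} ⊆ {1,i,j,k} and ε, ε' ∈ {±1} (the binary octahedral group 2O, i.e. the group of rotors generated by the reflections of B₃). Then −1 lies in the center of G, and the quotient group G/{±1} is isomorphic to the symmetric group on 4 letters (the rotation group of the octahedron); in particular G has order 48 and is a double cover of the chiral octahedral group. -/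
noncomputable section

/-- The 24 quaternions `(ε a + ε' b)/√2` where `{a, b}` ranges over the
two-element subsets of `{1, i, j, k}` and `ε, ε' ∈ {±1}`. -/
def octPart : Set (Quaternion ℝ) :=
  {x | ∃ ε ∈ pm, ∃ ε' ∈ pm, ∃ a ∈ ({1, qi, qj, qk} : Set (Quaternion ℝ)),
    ∃ b ∈ ({1, qi, qj, qk} : Set (Quaternion ℝ)), a ≠ b ∧
      x = (Real.sqrt 2)⁻¹ • (ε • a + ε' • b)}

/-! ### Auxiliary: quaternions over ℤ√2 -/

abbrev R2 : Type := Zsqrtd 2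

instance instDecEqQA {R : Type*} {c₁ c₂ c₃ : R} [DecidableEq R] :
    DecidableEq (QuaternionAlgebra R c₁ c₂ c₃) :=
  fun _ _ => decidable_of_iff _ (QuaternionAlgebra.ext_iff).symm

instance : DecidableEq (Quaternion R2) :=
  inferInstanceAs (DecidableEq (QuaternionAlgebra R2 (-1) 0 (-1)))

/-! Fast arithmetic on `Quaternion R2` for kernel computation. -/

def zmul (x y : R2) : R2 := ⟨x.re*y.re + 2*(x.im*y.im), x.re*y.im + x.im*y.re⟩
def zadd (x y : R2) : R2 := ⟨x.re + y.re, x.im + y.im⟩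
def zsub (x y : R2) : R2 := ⟨x.re - y.re, x.im - y.im⟩

def qmul (x y : Quaternion R2) : Quaternion R2 :=
  ⟨zsub (zsub (zsub (zmul x.re y.re) (zmul x.imI y.imI)) (zmul x.imJ y.imJ)) (zmul x.imK y.imK),
   zsub (zadd (zadd (zmul x.re y.imI) (zmul x.imI y.re)) (zmul x.imJ y.imK)) (zmul x.imK y.imJ),
   zadd (zsub (zadd (zmul x.re y.imJ) (zmul x.imJ y.re)) (zmul x.imI y.imK)) (zmul x.imK y.imI),
   zsub (zadd (zadd (zmul x.re y.imK) (zmul x.imK y.re)) (zmul x.imI y.imJ)) (zmul x.imJ y.imI)⟩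

def qdouble (x : Quaternion R2) : Quaternion R2 :=
  ⟨zadd x.re x.re, zadd x.imI x.imI, zadd x.imJ x.imJ, zadd x.imK x.imK⟩

def qneg (x : Quaternion R2) : Quaternion R2 :=
  ⟨⟨-x.re.re, -x.re.im⟩, ⟨-x.imI.re, -x.imI.im⟩, ⟨-x.imJ.re, -x.imJ.im⟩, ⟨-x.imK.re, -x.imK.im⟩⟩

def qstar (x : Quaternion R2) : Quaternion R2 :=
  ⟨x.re, ⟨-x.imI.re, -x.imI.im⟩, ⟨-x.imJ.re, -x.imJ.im⟩, ⟨-x.imK.re, -x.imK.im⟩⟩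

lemma qmul_eq (x y : Quaternion R2) : qmul x y = x * y := by
  ext <;>
    simp [qmul, zmul, zadd, zsub,
      Quaternion.re_mul, Quaternion.imI_mul, Quaternion.imJ_mul, Quaternion.imK_mul,
      Zsqrtd.re_mul, Zsqrtd.im_mul] <;> ring

lemma qdouble_eq (x : Quaternion R2) : qdouble x = x + x := by
  ext <;> simp [qdouble, zadd]

lemma qneg_eq (x : Quaternion R2) : qneg x = -x := by
  ext <;> simp [qneg]

lemma qneg_qneg (x : Quaternion R2) : qneg (qneg x) = x := by
  simp [qneg_eq]

lemma qmul_qneg_left (x y : Quaternion R2) : qmul (qneg x) y = qneg (qmul x y) := by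
  rw [qmul_eq, qmul_eq, qneg_eq, qneg_eq]; exact neg_mul x y

lemma qmul_qneg_right (x y : Quaternion R2) : qmul x (qneg y) = qneg (qmul x y) := by
  rw [qmul_eq, qmul_eq, qneg_eq, qneg_eq]; exact mul_neg x y

lemma qdouble_qneg (x : Quaternion R2) : qdouble (qneg x) = qneg (qdouble x) := by
  simp [qdouble_eq, qneg_eq]

def qbeq (x y : Quaternion R2) : Bool :=
  x.re.re == y.re.re && x.re.im == y.re.im && x.imI.re == y.imI.re && x.imI.im == y.imI.im &&
  x.imJ.re == y.imJ.re && x.imJ.im == y.imJ.im && x.imK.re == y.imK.re && x.imK.im == y.imK.im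

lemma qbeq_eq {x y : Quaternion R2} (h : qbeq x y = true) : x = y := by
  obtain ⟨⟨x1,x2⟩,⟨x3,x4⟩,⟨x5,x6⟩,⟨x7,x8⟩⟩ := x
  obtain ⟨⟨y1,y2⟩,⟨y3,y4⟩,⟨y5,y6⟩,⟨y7,y8⟩⟩ := y
  simp only [qbeq, Bool.and_eq_true, beq_iff_eq] at h
  obtain ⟨⟨⟨⟨⟨⟨⟨h1,h2⟩,h3⟩,h4⟩,h5⟩,h6⟩,h7⟩,h8⟩ := h
  subst h1 h2 h3 h4 h5 h6 h7 h8; rfl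

def NL24 : List (Quaternion R2) :=
  [⟨⟨2,0⟩, ⟨0,0⟩, ⟨0,0⟩, ⟨0,0⟩⟩,
   ⟨⟨0,0⟩, ⟨2,0⟩, ⟨0,0⟩, ⟨0,0⟩⟩,
   ⟨⟨0,0⟩, ⟨0,0⟩, ⟨2,0⟩, ⟨0,0⟩⟩,
   ⟨⟨0,0⟩, ⟨0,0⟩, ⟨0,0⟩, ⟨2,0⟩⟩,
   ⟨⟨1,0⟩, ⟨1,0⟩, ⟨1,0⟩, ⟨1,0⟩⟩,
   ⟨⟨1,0⟩, ⟨1,0⟩, ⟨1,0⟩, ⟨-1,0⟩⟩,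
   ⟨⟨1,0⟩, ⟨1,0⟩, ⟨-1,0⟩, ⟨1,0⟩⟩,
   ⟨⟨1,0⟩, ⟨1,0⟩, ⟨-1,0⟩, ⟨-1,0⟩⟩,
   ⟨⟨1,0⟩, ⟨-1,0⟩, ⟨1,0⟩, ⟨1,0⟩⟩,
   ⟨⟨1,0⟩, ⟨-1,0⟩, ⟨1,0⟩, ⟨-1,0⟩⟩,
   ⟨⟨1,0⟩, ⟨-1,0⟩, ⟨-1,0⟩, ⟨1,0⟩⟩,
   ⟨⟨1,0⟩, ⟨-1,0⟩, ⟨-1,0⟩, ⟨-1,0⟩⟩,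
   ⟨⟨0,1⟩, ⟨0,1⟩, ⟨0,0⟩, ⟨0,0⟩⟩,
   ⟨⟨0,1⟩, ⟨0,-1⟩, ⟨0,0⟩, ⟨0,0⟩⟩,
   ⟨⟨0,1⟩, ⟨0,0⟩, ⟨0,1⟩, ⟨0,0⟩⟩,
   ⟨⟨0,1⟩, ⟨0,0⟩, ⟨0,-1⟩, ⟨0,0⟩⟩,
   ⟨⟨0,1⟩, ⟨0,0⟩, ⟨0,0⟩, ⟨0,1⟩⟩,
   ⟨⟨0,1⟩, ⟨0,0⟩, ⟨0,0⟩, ⟨0,-1⟩⟩,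
   ⟨⟨0,0⟩, ⟨0,1⟩, ⟨0,1⟩, ⟨0,0⟩⟩,
   ⟨⟨0,0⟩, ⟨0,1⟩, ⟨0,-1⟩, ⟨0,0⟩⟩,
   ⟨⟨0,0⟩, ⟨0,1⟩, ⟨0,0⟩, ⟨0,1⟩⟩,
   ⟨⟨0,0⟩, ⟨0,1⟩, ⟨0,0⟩, ⟨0,-1⟩⟩,
   ⟨⟨0,0⟩, ⟨0,0⟩, ⟨0,1⟩, ⟨0,1⟩⟩,
   ⟨⟨0,0⟩, ⟨0,0⟩, ⟨0,1⟩, ⟨0,-1⟩⟩]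

def NL : List (Quaternion R2) := NL24 ++ NL24.map qneg

def qtwo : Quaternion R2 := ⟨⟨2,0⟩, ⟨0,0⟩, ⟨0,0⟩, ⟨0,0⟩⟩
def qfour : Quaternion R2 := ⟨⟨4,0⟩, ⟨0,0⟩, ⟨0,0⟩, ⟨0,0⟩⟩

def ebase : Fin 4 → Quaternion R2
  | 0 => ⟨⟨0,0⟩, ⟨1,0⟩, ⟨1,0⟩, ⟨1,0⟩⟩
  | 1 => ⟨⟨0,0⟩, ⟨1,0⟩, ⟨-1,0⟩, ⟨-1,0⟩⟩
  | 2 => ⟨⟨0,0⟩, ⟨-1,0⟩, ⟨1,0⟩, ⟨-1,0⟩⟩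
  | 3 => ⟨⟨0,0⟩, ⟨-1,0⟩, ⟨-1,0⟩, ⟨1,0⟩⟩

def D4bool (l : List (Quaternion R2)) : Bool :=
  l.all fun y => l.all fun z =>
    let p := qmul y z
    l.any fun w => qbeq p (qdouble w) || qbeq p (qdouble (qneg w))

set_option maxRecDepth 40000 in
set_option maxHeartbeats 4000000 in
lemma D4fact : D4bool NL24 = true := by decide

lemma Dtwo : qtwo ∈ NL ∧ qneg qtwo ∈ NL := by decide

set_option maxRecDepth 40000 in
set_option maxHeartbeats 1000000 in
lemma Dstar : ∀ y ∈ NL, qstar y ∈ NL ∧ qmul y (qstar y) = qfour ∧ qmul (qstar y) y = qfour := by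
  decide

set_option maxRecDepth 40000 in
set_option maxHeartbeats 4000000 in
lemma D5 : ∀ y ∈ NL, ∀ t : Fin 4, ∃ s : Fin 4,
    qmul (qmul y (ebase t)) (qstar y) = qdouble (qdouble (ebase s)) ∨
    qmul (qmul y (ebase t)) (qstar y) = qneg (qdouble (qdouble (ebase s))) := by
  decide

set_option maxRecDepth 40000 in
set_option maxHeartbeats 4000000 in
lemma D6 : ∀ y ∈ NL, (∀ t : Fin 4,
    qmul (qmul y (ebase t)) (qstar y) = qdouble (qdouble (ebase t)) ∨
    qmul (qmul y (ebase t)) (qstar y) = qneg (qdouble (qdouble (ebase t)))) →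
    y = qtwo ∨ y = qneg qtwo := by
  decide

lemma Dedist : ∀ s s' : Fin 4,
    qdouble (qdouble (ebase s)) = qdouble (qdouble (ebase s')) ∨
    qdouble (qdouble (ebase s)) = qneg (qdouble (qdouble (ebase s'))) → s = s' := by
  decide

lemma mem_NL_iff {x : Quaternion R2} :
    x ∈ NL ↔ x ∈ NL24 ∨ ∃ x' ∈ NL24, x = qneg x' := by
  simp only [NL, List.mem_append, List.mem_map]
  constructor
  · rintro (h | ⟨x', h, rfl⟩)
    · exact Or.inl h
    · exact Or.inr ⟨x', h, rfl⟩
  · rintro (h | ⟨x', h, rfl⟩)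
    · exact Or.inl h
    · exact Or.inr ⟨x', h, rfl⟩

lemma NL24_subset {x : Quaternion R2} (h : x ∈ NL24) : x ∈ NL ∧ qneg x ∈ NL := by
  constructor
  · exact List.mem_append.mpr (Or.inl h)
  · exact List.mem_append.mpr (Or.inr (List.mem_map.mpr ⟨x, h, rfl⟩))

lemma D4full : ∀ y ∈ NL, ∀ z ∈ NL, ∃ w ∈ NL, qmul y z = qdouble w := by
  have key : ∀ y ∈ NL24, ∀ z ∈ NL24, ∃ w ∈ NL, qmul y z = qdouble w ∨
      qmul y z = qdouble (qneg w) := by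
    intro y hy z hz
    have h1 := List.all_eq_true.mp D4fact y hy
    have h2 := List.all_eq_true.mp h1 z hz
    obtain ⟨w, hw, hor⟩ := List.any_eq_true.mp h2
    rcases Bool.or_eq_true _ _ |>.mp hor with h | h
    · exact ⟨w, (NL24_subset hw).1, Or.inl (qbeq_eq h)⟩
    · exact ⟨w, (NL24_subset hw).1, Or.inr (qbeq_eq h)⟩
  have key2 : ∀ y ∈ NL24, ∀ z ∈ NL24, ∃ w ∈ NL, qmul y z = qdouble w := by
    intro y hy z hz
    obtain ⟨w, hw, h | h⟩ := key y hy z hz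
    · exact ⟨w, hw, h⟩
    · refine ⟨qneg w, ?_, h⟩
      rcases mem_NL_iff.mp hw with hw' | ⟨w', hw', rfl⟩
      · exact (NL24_subset hw').2
      · rw [qneg_qneg]; exact (NL24_subset hw').1
  intro y hy z hz
  rcases mem_NL_iff.mp hy with hy' | ⟨y', hy', rfl⟩ <;>
    rcases mem_NL_iff.mp hz with hz' | ⟨z', hz', rfl⟩
  · exact key2 y hy' z hz'
  · obtain ⟨w, hw, h⟩ := key2 y hy' z' hz'
    refine ⟨qneg w, ?_, by rw [qmul_qneg_right, h, qdouble_qneg]⟩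
    rcases mem_NL_iff.mp hw with hw' | ⟨w', hw', rfl⟩
    · exact (NL24_subset hw').2
    · rw [qneg_qneg]; exact (NL24_subset hw').1
  · obtain ⟨w, hw, h⟩ := key2 y' hy' z hz'
    refine ⟨qneg w, ?_, by rw [qmul_qneg_left, h, qdouble_qneg]⟩
    rcases mem_NL_iff.mp hw with hw' | ⟨w', hw', rfl⟩
    · exact (NL24_subset hw').2
    · rw [qneg_qneg]; exact (NL24_subset hw').1
  · obtain ⟨w, hw, h⟩ := key2 y' hy' z' hz'
    exact ⟨w, hw, by rw [qmul_qneg_left, qmul_qneg_right, qneg_qneg, h]⟩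

/-! ### The map to real quaternions -/

def f0 (a : R2) : ℝ := (a.re : ℝ) + (a.im : ℝ) * Real.sqrt 2

lemma sqrt2_sq : Real.sqrt 2 * Real.sqrt 2 = 2 :=
  Real.mul_self_sqrt (by norm_num)

lemma f0_mul (a b : R2) : f0 (a * b) = f0 a * f0 b := by
  simp only [f0, Zsqrtd.re_mul, Zsqrtd.im_mul]
  push_cast
  linear_combination (-((a.im : ℝ) * (b.im : ℝ))) * sqrt2_sq

lemma f0_add (a b : R2) : f0 (a + b) = f0 a + f0 b := by
  simp only [f0, Zsqrtd.re_add, Zsqrtd.im_add]; push_cast; ring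

lemma f0_inj : Function.Injective f0 := by
  intro a b hab
  simp only [f0] at hab
  by_cases him : a.im = b.im
  · have : (a.re : ℝ) = b.re := by rw [him] at hab; linarith
    exact Zsqrtd.ext (by exact_mod_cast this) him
  · exfalso
    have h2 : ((a.im - b.im : ℤ) : ℝ) * Real.sqrt 2 = ((b.re - a.re : ℤ) : ℝ) := by
      push_cast; linarith
    have hne : ((a.im - b.im : ℤ) : ℝ) ≠ 0 := by
      simp only [ne_eq, Int.cast_eq_zero, sub_eq_zero]; exact him
    have : Real.sqrt 2 = ((b.re - a.re : ℤ) : ℝ) / ((a.im - b.im : ℤ) : ℝ) := by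
      rw [eq_div_iff hne]; push_cast; linear_combination hab
    have : Irrational (Real.sqrt 2) := irrational_sqrt_two
    rw [‹Real.sqrt 2 = _›] at this
    exact this ⟨((b.re - a.re : ℚ)) / ((a.im - b.im : ℚ)), by push_cast; norm_num⟩

def Fq (y : Quaternion R2) : Quaternion ℝ := ⟨f0 y.re, f0 y.imI, f0 y.imJ, f0 y.imK⟩

@[simp] lemma Fq_re (y : Quaternion R2) : (Fq y).re = f0 y.re := rfl
@[simp] lemma Fq_imI (y : Quaternion R2) : (Fq y).imI = f0 y.imI := rfl
@[simp] lemma Fq_imJ (y : Quaternion R2) : (Fq y).imJ = f0 y.imJ := rfl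
@[simp] lemma Fq_imK (y : Quaternion R2) : (Fq y).imK = f0 y.imK := rfl

lemma Fq_mul (x y : Quaternion R2) : Fq (x * y) = Fq x * Fq y := by
  refine QuaternionAlgebra.ext ?_ ?_ ?_ ?_ <;>
    simp only [Fq_re, Fq_imI, Fq_imJ, Fq_imK,
      Quaternion.re_mul, Quaternion.imI_mul, Quaternion.imJ_mul, Quaternion.imK_mul,
      f0, Zsqrtd.re_mul, Zsqrtd.im_mul, Zsqrtd.re_add, Zsqrtd.im_add,
      Zsqrtd.re_sub, Zsqrtd.im_sub] <;>
    push_cast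
  · linear_combination (-((x.re.im : ℝ) * y.re.im - (x.imI.im : ℝ) * y.imI.im - (x.imJ.im : ℝ) * y.imJ.im - (x.imK.im : ℝ) * y.imK.im)) * sqrt2_sq
  · linear_combination (-((x.re.im : ℝ) * y.imI.im + (x.imI.im : ℝ) * y.re.im + (x.imJ.im : ℝ) * y.imK.im - (x.imK.im : ℝ) * y.imJ.im)) * sqrt2_sq
  · linear_combination (-((x.re.im : ℝ) * y.imJ.im - (x.imI.im : ℝ) * y.imK.im + (x.imJ.im : ℝ) * y.re.im + (x.imK.im : ℝ) * y.imI.im)) * sqrt2_sq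
  · linear_combination (-((x.re.im : ℝ) * y.imK.im + (x.imI.im : ℝ) * y.imJ.im - (x.imJ.im : ℝ) * y.imI.im + (x.imK.im : ℝ) * y.re.im)) * sqrt2_sq

lemma Fq_add (x y : Quaternion R2) : Fq (x + y) = Fq x + Fq y := by
  ext <;> simp [f0_add]

lemma Fq_neg (x : Quaternion R2) : Fq (-x) = -Fq x := by
  ext <;> simp [f0, Zsqrtd.re_neg, Zsqrtd.im_neg] <;> push_cast <;> ring

lemma Fq_inj : Function.Injective Fq := by
  intro a b hab
  rw [Quaternion.ext_iff] at hab ⊢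
  exact ⟨f0_inj hab.1, f0_inj hab.2.1, f0_inj hab.2.2.1, f0_inj hab.2.2.2⟩

def hmap (y : Quaternion R2) : Quaternion ℝ := (2 : ℝ)⁻¹ • Fq y

@[simp] lemma hmap_mk_re (a b c d : R2) : (hmap ⟨a, b, c, d⟩).re = 2⁻¹ * f0 a := rfl
@[simp] lemma hmap_mk_imI (a b c d : R2) : (hmap ⟨a, b, c, d⟩).imI = 2⁻¹ * f0 b := rfl
@[simp] lemma hmap_mk_imJ (a b c d : R2) : (hmap ⟨a, b, c, d⟩).imJ = 2⁻¹ * f0 c := rfl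
@[simp] lemma hmap_mk_imK (a b c d : R2) : (hmap ⟨a, b, c, d⟩).imK = 2⁻¹ * f0 d := rfl
@[simp] lemma one_re' : (1 : Quaternion ℝ).re = 1 := rfl
@[simp] lemma one_imI' : (1 : Quaternion ℝ).imI = 0 := rfl
@[simp] lemma one_imJ' : (1 : Quaternion ℝ).imJ = 0 := rfl
@[simp] lemma one_imK' : (1 : Quaternion ℝ).imK = 0 := rfl
@[simp] lemma qi_re : qi.re = 0 := rfl
@[simp] lemma qi_imI : qi.imI = 1 := rfl
@[simp] lemma qi_imJ : qi.imJ = 0 := rfl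
@[simp] lemma qi_imK : qi.imK = 0 := rfl
@[simp] lemma qj_re : qj.re = 0 := rfl
@[simp] lemma qj_imI : qj.imI = 0 := rfl
@[simp] lemma qj_imJ : qj.imJ = 1 := rfl
@[simp] lemma qj_imK : qj.imK = 0 := rfl
@[simp] lemma qk_re : qk.re = 0 := rfl
@[simp] lemma qk_imI : qk.imI = 0 := rfl
@[simp] lemma qk_imJ : qk.imJ = 0 := rfl
@[simp] lemma qk_imK : qk.imK = 1 := rfl

lemma hmap_inj : Function.Injective hmap := by
  intro a b hab
  have := smul_right_injective (Quaternion ℝ) (by norm_num : ((2:ℝ)⁻¹) ≠ 0) hab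
  exact Fq_inj this

lemma hmap_mul_hmap (x y : Quaternion R2) :
    hmap x * hmap y = (4 : ℝ)⁻¹ • Fq (qmul x y) := by
  rw [qmul_eq, Fq_mul, hmap, hmap, smul_mul_smul_comm]
  norm_num

lemma quarter_Fq_qdouble (w : Quaternion R2) : (4 : ℝ)⁻¹ • Fq (qdouble w) = hmap w := by
  rw [qdouble_eq, Fq_add, hmap, smul_add, ← two_smul ℝ, smul_smul]
  norm_num

lemma hmap_mul (x y w : Quaternion R2) (h : qmul x y = qdouble w) :
    hmap x * hmap y = hmap w := by
  rw [hmap_mul_hmap, h, quarter_Fq_qdouble]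

lemma hmap_qtwo : hmap qtwo = 1 := by
  ext <;> simp [qtwo, f0] <;> norm_num

lemma hmap_qneg (x : Quaternion R2) : hmap (qneg x) = -hmap x := by
  rw [qneg_eq, hmap, Fq_neg, smul_neg]; rfl

lemma hmap_neg_qtwo : hmap (qneg qtwo) = -1 := by
  rw [hmap_qneg, hmap_qtwo]

lemma hmap_mul_one {y z : Quaternion R2} (h : qmul y z = qfour) : hmap y * hmap z = 1 := by
  have : qfour = qdouble qtwo := by decide
  rw [hmap_mul y z qtwo (by rw [h, this]), hmap_qtwo]

/-! ### The subgroup -/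

def Sset : Set (Quaternion ℝ) := hmap '' {y | y ∈ NL}

lemma mem_NL_of {x : Quaternion R2} (h : NL.any (fun w => qbeq x w) = true) : x ∈ {y | y ∈ NL} := by
  obtain ⟨w, hw, h⟩ := List.any_eq_true.mp h
  rw [qbeq_eq h]; exact hw

lemma unit_of_mem {y : Quaternion R2} (hy : y ∈ NL) :
    ∃ u : (Quaternion ℝ)ˣ, (u : Quaternion ℝ) = hmap y := by
  obtain ⟨hst, h1, h2⟩ := Dstar y hy
  exact ⟨⟨hmap y, hmap (qstar y), hmap_mul_one h1, hmap_mul_one h2⟩, rfl⟩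

lemma coe_inv_G {y : Quaternion R2} (hy : y ∈ NL) : (hmap y)⁻¹ = hmap (qstar y) := by
  obtain ⟨hst, h1, h2⟩ := Dstar y hy
  exact inv_eq_of_mul_eq_one_right (hmap_mul_one h1)

def G2O : Subgroup (Quaternion ℝ)ˣ where
  carrier := {u | (u : Quaternion ℝ) ∈ Sset}
  one_mem' := ⟨qtwo, Dtwo.1, hmap_qtwo⟩
  mul_mem' := by
    rintro a b ⟨y, hy, hya⟩ ⟨z, hz, hzb⟩
    obtain ⟨w, hw, hmul⟩ := D4full y hy z hz
    exact ⟨w, hw, by rw [← hmap_mul y z w hmul, hya, hzb]; rfl⟩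
  inv_mem' := by
    rintro a ⟨y, hy, hya⟩
    refine ⟨qstar y, (Dstar y hy).1, ?_⟩
    rw [← coe_inv_G hy, hya, Units.val_inv_eq_inv_val]

lemma mem_G2O_iff {u : (Quaternion ℝ)ˣ} : u ∈ G2O ↔ (u : Quaternion ℝ) ∈ Sset := Iff.rfl

lemma G2O_image :
    (fun u : (Quaternion ℝ)ˣ => (u : Quaternion ℝ)) '' (G2O : Set (Quaternion ℝ)ˣ) = Sset := by
  apply Set.Subset.antisymm
  · rintro x ⟨u, hu, rfl⟩; exact hu
  · rintro x ⟨y, hy, rfl⟩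
    obtain ⟨u, hu⟩ := unit_of_mem hy
    exact ⟨u, show (u : Quaternion ℝ) ∈ Sset by rw [hu]; exact ⟨y, hy, rfl⟩, hu⟩

lemma NL_toFinset_card : NL.toFinset.card = 48 := by decide

lemma card_G2O : Nat.card G2O = 48 := by
  have bij : Function.Bijective (fun g : G2O => (⟨(g : (Quaternion ℝ)ˣ), g.2⟩ : Sset)) := by
    constructor
    · intro g1 g2 h12
      have : ((g1 : (Quaternion ℝ)ˣ) : Quaternion ℝ) = ((g2 : (Quaternion ℝ)ˣ) : Quaternion ℝ) :=
        congrArg Subtype.val h12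
      exact Subtype.ext (Units.ext this)
    · rintro ⟨x, y, hy, rfl⟩
      obtain ⟨u, hu⟩ := unit_of_mem hy
      exact ⟨⟨u, show (u : Quaternion ℝ) ∈ Sset by rw [hu]; exact ⟨y, hy, rfl⟩⟩, Subtype.ext hu⟩
  rw [Nat.card_eq_of_bijective _ bij, Nat.card_coe_set_eq]
  have hset : {y : Quaternion R2 | y ∈ NL} = (NL.toFinset : Set (Quaternion R2)) := by
    ext z; simp
  rw [Sset, hset, Set.ncard_image_of_injective _ hmap_inj, Set.ncard_coe_finset,
    NL_toFinset_card]

lemma neg_one_mem_G2O : (-1 : (Quaternion ℝ)ˣ) ∈ G2O := by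
  rw [mem_G2O_iff]
  exact ⟨qneg qtwo, Dtwo.2, by rw [hmap_neg_qtwo]; simp⟩

lemma neg_one_central : (⟨-1, neg_one_mem_G2O⟩ : G2O) ∈ Subgroup.center G2O := by
  rw [Subgroup.mem_center_iff]
  intro g
  apply Subtype.ext
  simp only [Subgroup.coe_mul, MulMemClass.mk_mul_mk]
  exact (mul_neg_one (g : (Quaternion ℝ)ˣ)).trans (neg_one_mul _).symm

/-! ### The action on the four diagonals -/

def Er (t : Fin 4) : Quaternion ℝ := Fq (ebase t)

lemma Fq_qneg (x : Quaternion R2) : Fq (qneg x) = -Fq x := by rw [qneg_eq, Fq_neg]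

lemma smul_cancel {A B : Quaternion R2} : (4:ℝ)⁻¹ • Fq A = (4:ℝ)⁻¹ • Fq B ↔ A = B := by
  constructor
  · intro h
    exact Fq_inj (smul_right_injective (Quaternion ℝ) (by norm_num : ((4:ℝ)⁻¹) ≠ 0) h)
  · rintro rfl; rfl

lemma Er_scale (s : Fin 4) : (4:ℝ)⁻¹ • Fq (qdouble (qdouble (ebase s))) = Er s := by
  rw [qdouble_eq, qdouble_eq, Fq_add, Fq_add, Er]
  module

lemma Er_scale_neg (s : Fin 4) :
    (4:ℝ)⁻¹ • Fq (qneg (qdouble (qdouble (ebase s)))) = -Er s := by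
  rw [Fq_qneg, smul_neg, Er_scale]

lemma triple (y z m : Quaternion R2) :
    hmap y * Fq m * hmap z = (4:ℝ)⁻¹ • Fq (qmul (qmul y m) z) := by
  rw [qmul_eq, qmul_eq, Fq_mul, Fq_mul, hmap, hmap, smul_mul_assoc, smul_mul_assoc,
    mul_smul_comm, smul_smul]
  norm_num

lemma conj_iff {y : Quaternion R2} (hy : y ∈ NL) (t s : Fin 4) :
    (hmap y * Er t * (hmap y)⁻¹ = Er s ∨ hmap y * Er t * (hmap y)⁻¹ = -Er s) ↔
    (qmul (qmul y (ebase t)) (qstar y) = qdouble (qdouble (ebase s)) ∨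
     qmul (qmul y (ebase t)) (qstar y) = qneg (qdouble (qdouble (ebase s)))) := by
  rw [coe_inv_G hy, Er, triple y (qstar y) (ebase t), ← Er_scale s, ← smul_neg, ← Fq_qneg]
  exact or_congr smul_cancel smul_cancel

lemma sign_combine {P A B : Quaternion R2}
    (h1 : P = A ∨ P = qneg A) (h2 : P = B ∨ P = qneg B) :
    A = B ∨ A = qneg B := by
  rcases h1 with h1 | h1 <;> rcases h2 with h2 | h2
  · exact Or.inl (h1 ▸ h2 ▸ rfl)
  · exact Or.inr (h1 ▸ h2 ▸ rfl)
  · rw [h1] at h2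
    exact Or.inr (by rw [← qneg_qneg A, h2])
  · rw [h1] at h2
    exact Or.inl (by rw [← qneg_qneg A, h2, qneg_qneg])

lemma eu (u : G2O) (t : Fin 4) :
    ∃! s : Fin 4, ((u : (Quaternion ℝ)ˣ) : Quaternion ℝ) * Er t *
        (((u : (Quaternion ℝ)ˣ) : Quaternion ℝ))⁻¹ = Er s ∨
      ((u : (Quaternion ℝ)ˣ) : Quaternion ℝ) * Er t *
        (((u : (Quaternion ℝ)ˣ) : Quaternion ℝ))⁻¹ = -Er s := by
  obtain ⟨y, hy, hyu⟩ := u.2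
  obtain ⟨s0, hs0⟩ := D5 y hy t
  rw [show ((u : (Quaternion ℝ)ˣ) : Quaternion ℝ) = hmap y from hyu.symm]
  refine ⟨s0, (conj_iff hy t s0).mpr hs0, ?_⟩
  intro s1 hs1
  have h1 := (conj_iff hy t s1).mp hs1
  exact Dedist s1 s0 (sign_combine h1 hs0)

noncomputable def sig (u : G2O) (t : Fin 4) : Fin 4 := (eu u t).choose

lemma sig_spec (u : G2O) (t : Fin 4) :
    ((u : (Quaternion ℝ)ˣ) : Quaternion ℝ) * Er t *
        (((u : (Quaternion ℝ)ˣ) : Quaternion ℝ))⁻¹ = Er (sig u t) ∨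
      ((u : (Quaternion ℝ)ˣ) : Quaternion ℝ) * Er t *
        (((u : (Quaternion ℝ)ˣ) : Quaternion ℝ))⁻¹ = -Er (sig u t) :=
  (eu u t).choose_spec.1

lemma sig_eq (u : G2O) (t s : Fin 4)
    (h : ((u : (Quaternion ℝ)ˣ) : Quaternion ℝ) * Er t *
        (((u : (Quaternion ℝ)ˣ) : Quaternion ℝ))⁻¹ = Er s ∨
      ((u : (Quaternion ℝ)ˣ) : Quaternion ℝ) * Er t *
        (((u : (Quaternion ℝ)ˣ) : Quaternion ℝ))⁻¹ = -Er s) :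
    sig u t = s :=
  ((eu u t).choose_spec.2 s h).symm

lemma sig_mul (u v : G2O) (t : Fin 4) : sig (u * v) t = sig u (sig v t) := by
  symm
  refine (eu (u * v) t).choose_spec.2 _ ?_ |>.symm |>.symm
  have key : ((((u * v) : G2O) : (Quaternion ℝ)ˣ) : Quaternion ℝ) * Er t *
      (((((u * v) : G2O) : (Quaternion ℝ)ˣ) : Quaternion ℝ))⁻¹ =
      ((u : (Quaternion ℝ)ˣ) : Quaternion ℝ) *
        (((v : (Quaternion ℝ)ˣ) : Quaternion ℝ) * Er t *
          (((v : (Quaternion ℝ)ˣ) : Quaternion ℝ))⁻¹) *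
        (((u : (Quaternion ℝ)ˣ) : Quaternion ℝ))⁻¹ := by
    push_cast
    rw [mul_inv_rev]
    simp [mul_assoc]
  rw [key]
  rcases sig_spec v t with h | h <;> rw [h]
  · exact sig_spec u (sig v t)
  · rcases sig_spec u (sig v t) with h2 | h2
    · rw [mul_neg, neg_mul, h2]; exact Or.inr rfl
    · rw [mul_neg, neg_mul, h2, neg_neg]; exact Or.inl rfl

lemma sig_one (t : Fin 4) : sig 1 t = t := by
  apply sig_eq
  simp

lemma sig_left_inv (u : G2O) (t : Fin 4) : sig u⁻¹ (sig u t) = t := by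
  rw [← sig_mul, inv_mul_cancel, sig_one]

lemma sig_right_inv (u : G2O) (t : Fin 4) : sig u (sig u⁻¹ t) = t := by
  rw [← sig_mul, mul_inv_cancel, sig_one]

noncomputable def phi : G2O →* Equiv.Perm (Fin 4) :=
  MonoidHom.mk' (fun u => ⟨sig u, sig u⁻¹, sig_left_inv u, sig_right_inv u⟩)
    (fun u v => Equiv.ext fun t => by
      simp only [Equiv.coe_fn_mk, Equiv.Perm.mul_apply]
      exact sig_mul u v t)

/-! ### Kernel and surjectivity -/

lemma phi_neg_one : phi ⟨-1, neg_one_mem_G2O⟩ = 1 := by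
  refine Equiv.ext fun t => ?_
  show sig ⟨-1, neg_one_mem_G2O⟩ t = t
  apply sig_eq
  left
  show ((-1 : (Quaternion ℝ)ˣ) : Quaternion ℝ) * Er t *
    (((-1 : (Quaternion ℝ)ˣ) : Quaternion ℝ))⁻¹ = Er t
  simp [inv_neg_one]

lemma one_ne_neg_one : (1 : G2O) ≠ ⟨-1, neg_one_mem_G2O⟩ := by
  intro h
  have h2 : ((1 : G2O) : (Quaternion ℝ)ˣ) = -1 := congrArg Subtype.val h
  have h3 : ((1 : (Quaternion ℝ)ˣ) : Quaternion ℝ) = ((-1 : (Quaternion ℝ)ˣ) : Quaternion ℝ) :=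
    congrArg Units.val h2
  rw [Units.val_one] at h3
  have h4 : ((-1 : (Quaternion ℝ)ˣ) : Quaternion ℝ) = -1 := by simp
  rw [h4] at h3
  have h5 := congrArg QuaternionAlgebra.re h3
  norm_num at h5

lemma ker_phi : (phi.ker : Set G2O) = {1, ⟨-1, neg_one_mem_G2O⟩} := by
  ext u
  simp only [SetLike.mem_coe, MonoidHom.mem_ker, Set.mem_insert_iff, Set.mem_singleton_iff]
  constructor
  · intro hu
    have hsig : ∀ t, sig u t = t := fun t => by
      have : (phi u) t = (1 : Equiv.Perm (Fin 4)) t := by rw [hu]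
      simpa [phi] using this
    obtain ⟨y, hy, hyu⟩ := u.2
    have hdown : ∀ t : Fin 4,
        qmul (qmul y (ebase t)) (qstar y) = qdouble (qdouble (ebase t)) ∨
        qmul (qmul y (ebase t)) (qstar y) = qneg (qdouble (qdouble (ebase t))) := by
      intro t
      have hs := sig_spec u t
      rw [hsig t] at hs
      rw [show ((u : (Quaternion ℝ)ˣ) : Quaternion ℝ) = hmap y from hyu.symm] at hs
      exact (conj_iff hy t t).mp hs
    rcases D6 y hy hdown with h | h
    · left
      refine Subtype.ext (Units.ext ?_)
      rw [← hyu, h, hmap_qtwo]; rfl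
    · right
      refine Subtype.ext (Units.ext ?_)
      rw [← hyu, h, hmap_neg_qtwo]; simp
  · rintro (rfl | rfl)
    · exact map_one phi
    · exact phi_neg_one

instance : Finite G2O := Nat.finite_of_card_ne_zero (by rw [card_G2O]; norm_num)

lemma card_ker_phi : Nat.card phi.ker = 2 := by
  have h1 : Nat.card phi.ker = ((phi.ker : Set G2O)).ncard :=
    (Nat.card_coe_set_eq _)
  rw [h1, ker_phi, Set.ncard_pair one_ne_neg_one]

lemma phi_surjective : Function.Surjective phi := by
  rw [← MonoidHom.range_eq_top]
  apply Subgroup.eq_top_of_card_eq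
  have hq := Subgroup.card_eq_card_quotient_mul_card_subgroup phi.ker
  rw [card_G2O, card_ker_phi] at hq
  have hrange : Nat.card phi.range = Nat.card (G2O ⧸ phi.ker) :=
    (Nat.card_congr (QuotientGroup.quotientKerEquivRange phi).toEquiv).symm
  have hperm : Nat.card (Equiv.Perm (Fin 4)) = 24 := by
    rw [Nat.card_eq_fintype_card, Fintype.card_perm, Fintype.card_fin]
    norm_num [Nat.factorial]
  rw [hrange, hperm]
  omega

lemma s2inv : (Real.sqrt 2)⁻¹ = 2⁻¹ * Real.sqrt 2 := by
  have h : Real.sqrt 2 ≠ 0 := by positivity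
  field_simp
  rw [Real.sq_sqrt (by norm_num)]

set_option maxHeartbeats 3200000 in
lemma Sset_sub : Sset ⊆ hurwitzUnits ∪ octPart := by
  rintro x ⟨y, hy, rfl⟩
  have hNL : NL = [(⟨⟨2,0⟩, ⟨0,0⟩, ⟨0,0⟩, ⟨0,0⟩⟩ : Quaternion R2),
      (⟨⟨0,0⟩, ⟨2,0⟩, ⟨0,0⟩, ⟨0,0⟩⟩ : Quaternion R2),
      (⟨⟨0,0⟩, ⟨0,0⟩, ⟨2,0⟩, ⟨0,0⟩⟩ : Quaternion R2),
      (⟨⟨0,0⟩, ⟨0,0⟩, ⟨0,0⟩, ⟨2,0⟩⟩ : Quaternion R2),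
      (⟨⟨1,0⟩, ⟨1,0⟩, ⟨1,0⟩, ⟨1,0⟩⟩ : Quaternion R2),
      (⟨⟨1,0⟩, ⟨1,0⟩, ⟨1,0⟩, ⟨-1,0⟩⟩ : Quaternion R2),
      (⟨⟨1,0⟩, ⟨1,0⟩, ⟨-1,0⟩, ⟨1,0⟩⟩ : Quaternion R2),
      (⟨⟨1,0⟩, ⟨1,0⟩, ⟨-1,0⟩, ⟨-1,0⟩⟩ : Quaternion R2),
      (⟨⟨1,0⟩, ⟨-1,0⟩, ⟨1,0⟩, ⟨1,0⟩⟩ : Quaternion R2),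
      (⟨⟨1,0⟩, ⟨-1,0⟩, ⟨1,0⟩, ⟨-1,0⟩⟩ : Quaternion R2),
      (⟨⟨1,0⟩, ⟨-1,0⟩, ⟨-1,0⟩, ⟨1,0⟩⟩ : Quaternion R2),
      (⟨⟨1,0⟩, ⟨-1,0⟩, ⟨-1,0⟩, ⟨-1,0⟩⟩ : Quaternion R2),
      (⟨⟨0,1⟩, ⟨0,1⟩, ⟨0,0⟩, ⟨0,0⟩⟩ : Quaternion R2),
      (⟨⟨0,1⟩, ⟨0,-1⟩, ⟨0,0⟩, ⟨0,0⟩⟩ : Quaternion R2),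
      (⟨⟨0,1⟩, ⟨0,0⟩, ⟨0,1⟩, ⟨0,0⟩⟩ : Quaternion R2),
      (⟨⟨0,1⟩, ⟨0,0⟩, ⟨0,-1⟩, ⟨0,0⟩⟩ : Quaternion R2),
      (⟨⟨0,1⟩, ⟨0,0⟩, ⟨0,0⟩, ⟨0,1⟩⟩ : Quaternion R2),
      (⟨⟨0,1⟩, ⟨0,0⟩, ⟨0,0⟩, ⟨0,-1⟩⟩ : Quaternion R2),
      (⟨⟨0,0⟩, ⟨0,1⟩, ⟨0,1⟩, ⟨0,0⟩⟩ : Quaternion R2),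
      (⟨⟨0,0⟩, ⟨0,1⟩, ⟨0,-1⟩, ⟨0,0⟩⟩ : Quaternion R2),
      (⟨⟨0,0⟩, ⟨0,1⟩, ⟨0,0⟩, ⟨0,1⟩⟩ : Quaternion R2),
      (⟨⟨0,0⟩, ⟨0,1⟩, ⟨0,0⟩, ⟨0,-1⟩⟩ : Quaternion R2),
      (⟨⟨0,0⟩, ⟨0,0⟩, ⟨0,1⟩, ⟨0,1⟩⟩ : Quaternion R2),
      (⟨⟨0,0⟩, ⟨0,0⟩, ⟨0,1⟩, ⟨0,-1⟩⟩ : Quaternion R2),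
      (⟨⟨-2,0⟩, ⟨0,0⟩, ⟨0,0⟩, ⟨0,0⟩⟩ : Quaternion R2),
      (⟨⟨0,0⟩, ⟨-2,0⟩, ⟨0,0⟩, ⟨0,0⟩⟩ : Quaternion R2),
      (⟨⟨0,0⟩, ⟨0,0⟩, ⟨-2,0⟩, ⟨0,0⟩⟩ : Quaternion R2),
      (⟨⟨0,0⟩, ⟨0,0⟩, ⟨0,0⟩, ⟨-2,0⟩⟩ : Quaternion R2),
      (⟨⟨-1,0⟩, ⟨-1,0⟩, ⟨-1,0⟩, ⟨-1,0⟩⟩ : Quaternion R2),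
      (⟨⟨-1,0⟩, ⟨-1,0⟩, ⟨-1,0⟩, ⟨1,0⟩⟩ : Quaternion R2),
      (⟨⟨-1,0⟩, ⟨-1,0⟩, ⟨1,0⟩, ⟨-1,0⟩⟩ : Quaternion R2),
      (⟨⟨-1,0⟩, ⟨-1,0⟩, ⟨1,0⟩, ⟨1,0⟩⟩ : Quaternion R2),
      (⟨⟨-1,0⟩, ⟨1,0⟩, ⟨-1,0⟩, ⟨-1,0⟩⟩ : Quaternion R2),
      (⟨⟨-1,0⟩, ⟨1,0⟩, ⟨-1,0⟩, ⟨1,0⟩⟩ : Quaternion R2),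
      (⟨⟨-1,0⟩, ⟨1,0⟩, ⟨1,0⟩, ⟨-1,0⟩⟩ : Quaternion R2),
      (⟨⟨-1,0⟩, ⟨1,0⟩, ⟨1,0⟩, ⟨1,0⟩⟩ : Quaternion R2),
      (⟨⟨0,-1⟩, ⟨0,-1⟩, ⟨0,0⟩, ⟨0,0⟩⟩ : Quaternion R2),
      (⟨⟨0,-1⟩, ⟨0,1⟩, ⟨0,0⟩, ⟨0,0⟩⟩ : Quaternion R2),
      (⟨⟨0,-1⟩, ⟨0,0⟩, ⟨0,-1⟩, ⟨0,0⟩⟩ : Quaternion R2),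
      (⟨⟨0,-1⟩, ⟨0,0⟩, ⟨0,1⟩, ⟨0,0⟩⟩ : Quaternion R2),
      (⟨⟨0,-1⟩, ⟨0,0⟩, ⟨0,0⟩, ⟨0,-1⟩⟩ : Quaternion R2),
      (⟨⟨0,-1⟩, ⟨0,0⟩, ⟨0,0⟩, ⟨0,1⟩⟩ : Quaternion R2),
      (⟨⟨0,0⟩, ⟨0,-1⟩, ⟨0,-1⟩, ⟨0,0⟩⟩ : Quaternion R2),
      (⟨⟨0,0⟩, ⟨0,-1⟩, ⟨0,1⟩, ⟨0,0⟩⟩ : Quaternion R2),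
      (⟨⟨0,0⟩, ⟨0,-1⟩, ⟨0,0⟩, ⟨0,-1⟩⟩ : Quaternion R2),
      (⟨⟨0,0⟩, ⟨0,-1⟩, ⟨0,0⟩, ⟨0,1⟩⟩ : Quaternion R2),
      (⟨⟨0,0⟩, ⟨0,0⟩, ⟨0,-1⟩, ⟨0,-1⟩⟩ : Quaternion R2),
      (⟨⟨0,0⟩, ⟨0,0⟩, ⟨0,-1⟩, ⟨0,1⟩⟩ : Quaternion R2)] := by rfl
  rw [hNL] at hy
  simp only [Set.mem_setOf_eq] at hy
  repeat erw [List.mem_cons] at hy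
  erw [List.mem_nil_iff, or_false] at hy
  rcases hy with rfl|rfl|rfl|rfl|rfl|rfl|rfl|rfl|rfl|rfl|rfl|rfl|rfl|rfl|rfl|rfl|rfl|rfl|rfl|rfl|rfl|rfl|rfl|rfl|rfl|rfl|rfl|rfl|rfl|rfl|rfl|rfl|rfl|rfl|rfl|rfl|rfl|rfl|rfl|rfl|rfl|rfl|rfl|rfl|rfl|rfl|rfl|rfl
  · refine Set.mem_union_left _ (Set.mem_union_left _ ?_)
    rw [show hmap (⟨⟨2,0⟩, ⟨0,0⟩, ⟨0,0⟩, ⟨0,0⟩⟩ : Quaternion R2) = (1 : Quaternion ℝ) from by ext <;> simp [f0, s2inv] <;> (try norm_num [s2inv]) <;> (try ring)]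
    simp
  · refine Set.mem_union_left _ (Set.mem_union_left _ ?_)
    rw [show hmap (⟨⟨0,0⟩, ⟨2,0⟩, ⟨0,0⟩, ⟨0,0⟩⟩ : Quaternion R2) = qi from by ext <;> simp [f0, s2inv] <;> (try norm_num [s2inv]) <;> (try ring)]
    simp
  · refine Set.mem_union_left _ (Set.mem_union_left _ ?_)
    rw [show hmap (⟨⟨0,0⟩, ⟨0,0⟩, ⟨2,0⟩, ⟨0,0⟩⟩ : Quaternion R2) = qj from by ext <;> simp [f0, s2inv] <;> (try norm_num [s2inv]) <;> (try ring)]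
    simp
  · refine Set.mem_union_left _ (Set.mem_union_left _ ?_)
    rw [show hmap (⟨⟨0,0⟩, ⟨0,0⟩, ⟨0,0⟩, ⟨2,0⟩⟩ : Quaternion R2) = qk from by ext <;> simp [f0, s2inv] <;> (try norm_num [s2inv]) <;> (try ring)]
    simp
  · refine Set.mem_union_left _ (Set.mem_union_right _ ?_)
    exact ⟨(1:ℝ), by simp [pm], (1:ℝ), by simp [pm], (1:ℝ), by simp [pm], (1:ℝ), by simp [pm], by ext <;> simp [f0, s2inv] <;> (try norm_num [s2inv]) <;> (try ring)⟩
  · refine Set.mem_union_left _ (Set.mem_union_right _ ?_)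
    exact ⟨(1:ℝ), by simp [pm], (1:ℝ), by simp [pm], (1:ℝ), by simp [pm], (-1:ℝ), by simp [pm], by ext <;> simp [f0, s2inv] <;> (try norm_num [s2inv]) <;> (try ring)⟩
  · refine Set.mem_union_left _ (Set.mem_union_right _ ?_)
    exact ⟨(1:ℝ), by simp [pm], (1:ℝ), by simp [pm], (-1:ℝ), by simp [pm], (1:ℝ), by simp [pm], by ext <;> simp [f0, s2inv] <;> (try norm_num [s2inv]) <;> (try ring)⟩
  · refine Set.mem_union_left _ (Set.mem_union_right _ ?_)
    exact ⟨(1:ℝ), by simp [pm], (1:ℝ), by simp [pm], (-1:ℝ), by simp [pm], (-1:ℝ), by simp [pm], by ext <;> simp [f0, s2inv] <;> (try norm_num [s2inv]) <;> (try ring)⟩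
  · refine Set.mem_union_left _ (Set.mem_union_right _ ?_)
    exact ⟨(1:ℝ), by simp [pm], (-1:ℝ), by simp [pm], (1:ℝ), by simp [pm], (1:ℝ), by simp [pm], by ext <;> simp [f0, s2inv] <;> (try norm_num [s2inv]) <;> (try ring)⟩
  · refine Set.mem_union_left _ (Set.mem_union_right _ ?_)
    exact ⟨(1:ℝ), by simp [pm], (-1:ℝ), by simp [pm], (1:ℝ), by simp [pm], (-1:ℝ), by simp [pm], by ext <;> simp [f0, s2inv] <;> (try norm_num [s2inv]) <;> (try ring)⟩
  · refine Set.mem_union_left _ (Set.mem_union_right _ ?_)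
    exact ⟨(1:ℝ), by simp [pm], (-1:ℝ), by simp [pm], (-1:ℝ), by simp [pm], (1:ℝ), by simp [pm], by ext <;> simp [f0, s2inv] <;> (try norm_num [s2inv]) <;> (try ring)⟩
  · refine Set.mem_union_left _ (Set.mem_union_right _ ?_)
    exact ⟨(1:ℝ), by simp [pm], (-1:ℝ), by simp [pm], (-1:ℝ), by simp [pm], (-1:ℝ), by simp [pm], by ext <;> simp [f0, s2inv] <;> (try norm_num [s2inv]) <;> (try ring)⟩
  · refine Set.mem_union_right _ ?_
    exact ⟨(1:ℝ), by simp [pm], (1:ℝ), by simp [pm], (1 : Quaternion ℝ), by simp, qi, by simp, ⟨by intro hcon; have := congrArg QuaternionAlgebra.imI hcon; simp [qi, qj, qk] at this, by ext <;> simp [f0, s2inv] <;> (try norm_num [s2inv]) <;> (try ring)⟩⟩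
  · refine Set.mem_union_right _ ?_
    exact ⟨(1:ℝ), by simp [pm], (-1:ℝ), by simp [pm], (1 : Quaternion ℝ), by simp, qi, by simp, ⟨by intro hcon; have := congrArg QuaternionAlgebra.imI hcon; simp [qi, qj, qk] at this, by ext <;> simp [f0, s2inv] <;> (try norm_num [s2inv]) <;> (try ring)⟩⟩
  · refine Set.mem_union_right _ ?_
    exact ⟨(1:ℝ), by simp [pm], (1:ℝ), by simp [pm], (1 : Quaternion ℝ), by simp, qj, by simp, ⟨by intro hcon; have := congrArg QuaternionAlgebra.imJ hcon; simp [qi, qj, qk] at this, by ext <;> simp [f0, s2inv] <;> (try norm_num [s2inv]) <;> (try ring)⟩⟩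
  · refine Set.mem_union_right _ ?_
    exact ⟨(1:ℝ), by simp [pm], (-1:ℝ), by simp [pm], (1 : Quaternion ℝ), by simp, qj, by simp, ⟨by intro hcon; have := congrArg QuaternionAlgebra.imJ hcon; simp [qi, qj, qk] at this, by ext <;> simp [f0, s2inv] <;> (try norm_num [s2inv]) <;> (try ring)⟩⟩
  · refine Set.mem_union_right _ ?_
    exact ⟨(1:ℝ), by simp [pm], (1:ℝ), by simp [pm], (1 : Quaternion ℝ), by simp, qk, by simp, ⟨by intro hcon; have := congrArg QuaternionAlgebra.imK hcon; simp [qi, qj, qk] at this, by ext <;> simp [f0, s2inv] <;> (try norm_num [s2inv]) <;> (try ring)⟩⟩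
  · refine Set.mem_union_right _ ?_
    exact ⟨(1:ℝ), by simp [pm], (-1:ℝ), by simp [pm], (1 : Quaternion ℝ), by simp, qk, by simp, ⟨by intro hcon; have := congrArg QuaternionAlgebra.imK hcon; simp [qi, qj, qk] at this, by ext <;> simp [f0, s2inv] <;> (try norm_num [s2inv]) <;> (try ring)⟩⟩
  · refine Set.mem_union_right _ ?_
    exact ⟨(1:ℝ), by simp [pm], (1:ℝ), by simp [pm], qi, by simp, qj, by simp, ⟨by intro hcon; have := congrArg QuaternionAlgebra.imI hcon; simp [qi, qj, qk] at this, by ext <;> simp [f0, s2inv] <;> (try norm_num [s2inv]) <;> (try ring)⟩⟩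
  · refine Set.mem_union_right _ ?_
    exact ⟨(1:ℝ), by simp [pm], (-1:ℝ), by simp [pm], qi, by simp, qj, by simp, ⟨by intro hcon; have := congrArg QuaternionAlgebra.imI hcon; simp [qi, qj, qk] at this, by ext <;> simp [f0, s2inv] <;> (try norm_num [s2inv]) <;> (try ring)⟩⟩
  · refine Set.mem_union_right _ ?_
    exact ⟨(1:ℝ), by simp [pm], (1:ℝ), by simp [pm], qi, by simp, qk, by simp, ⟨by intro hcon; have := congrArg QuaternionAlgebra.imI hcon; simp [qi, qj, qk] at this, by ext <;> simp [f0, s2inv] <;> (try norm_num [s2inv]) <;> (try ring)⟩⟩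
  · refine Set.mem_union_right _ ?_
    exact ⟨(1:ℝ), by simp [pm], (-1:ℝ), by simp [pm], qi, by simp, qk, by simp, ⟨by intro hcon; have := congrArg QuaternionAlgebra.imI hcon; simp [qi, qj, qk] at this, by ext <;> simp [f0, s2inv] <;> (try norm_num [s2inv]) <;> (try ring)⟩⟩
  · refine Set.mem_union_right _ ?_
    exact ⟨(1:ℝ), by simp [pm], (1:ℝ), by simp [pm], qj, by simp, qk, by simp, ⟨by intro hcon; have := congrArg QuaternionAlgebra.imJ hcon; simp [qi, qj, qk] at this, by ext <;> simp [f0, s2inv] <;> (try norm_num [s2inv]) <;> (try ring)⟩⟩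
  · refine Set.mem_union_right _ ?_
    exact ⟨(1:ℝ), by simp [pm], (-1:ℝ), by simp [pm], qj, by simp, qk, by simp, ⟨by intro hcon; have := congrArg QuaternionAlgebra.imJ hcon; simp [qi, qj, qk] at this, by ext <;> simp [f0, s2inv] <;> (try norm_num [s2inv]) <;> (try ring)⟩⟩
  · refine Set.mem_union_left _ (Set.mem_union_left _ ?_)
    rw [show hmap (⟨⟨-2,0⟩, ⟨0,0⟩, ⟨0,0⟩, ⟨0,0⟩⟩ : Quaternion R2) = (-1 : Quaternion ℝ) from by ext <;> simp [f0, s2inv] <;> (try norm_num [s2inv]) <;> (try ring)]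
    simp
  · refine Set.mem_union_left _ (Set.mem_union_left _ ?_)
    rw [show hmap (⟨⟨0,0⟩, ⟨-2,0⟩, ⟨0,0⟩, ⟨0,0⟩⟩ : Quaternion R2) = -qi from by ext <;> simp [f0, s2inv] <;> (try norm_num [s2inv]) <;> (try ring)]
    simp
  · refine Set.mem_union_left _ (Set.mem_union_left _ ?_)
    rw [show hmap (⟨⟨0,0⟩, ⟨0,0⟩, ⟨-2,0⟩, ⟨0,0⟩⟩ : Quaternion R2) = -qj from by ext <;> simp [f0, s2inv] <;> (try norm_num [s2inv]) <;> (try ring)]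
    simp
  · refine Set.mem_union_left _ (Set.mem_union_left _ ?_)
    rw [show hmap (⟨⟨0,0⟩, ⟨0,0⟩, ⟨0,0⟩, ⟨-2,0⟩⟩ : Quaternion R2) = -qk from by ext <;> simp [f0, s2inv] <;> (try norm_num [s2inv]) <;> (try ring)]
    simp
  · refine Set.mem_union_left _ (Set.mem_union_right _ ?_)
    exact ⟨(-1:ℝ), by simp [pm], (-1:ℝ), by simp [pm], (-1:ℝ), by simp [pm], (-1:ℝ), by simp [pm], by ext <;> simp [f0, s2inv] <;> (try norm_num [s2inv]) <;> (try ring)⟩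
  · refine Set.mem_union_left _ (Set.mem_union_right _ ?_)
    exact ⟨(-1:ℝ), by simp [pm], (-1:ℝ), by simp [pm], (-1:ℝ), by simp [pm], (1:ℝ), by simp [pm], by ext <;> simp [f0, s2inv] <;> (try norm_num [s2inv]) <;> (try ring)⟩
  · refine Set.mem_union_left _ (Set.mem_union_right _ ?_)
    exact ⟨(-1:ℝ), by simp [pm], (-1:ℝ), by simp [pm], (1:ℝ), by simp [pm], (-1:ℝ), by simp [pm], by ext <;> simp [f0, s2inv] <;> (try norm_num [s2inv]) <;> (try ring)⟩
  · refine Set.mem_union_left _ (Set.mem_union_right _ ?_)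
    exact ⟨(-1:ℝ), by simp [pm], (-1:ℝ), by simp [pm], (1:ℝ), by simp [pm], (1:ℝ), by simp [pm], by ext <;> simp [f0, s2inv] <;> (try norm_num [s2inv]) <;> (try ring)⟩
  · refine Set.mem_union_left _ (Set.mem_union_right _ ?_)
    exact ⟨(-1:ℝ), by simp [pm], (1:ℝ), by simp [pm], (-1:ℝ), by simp [pm], (-1:ℝ), by simp [pm], by ext <;> simp [f0, s2inv] <;> (try norm_num [s2inv]) <;> (try ring)⟩
  · refine Set.mem_union_left _ (Set.mem_union_right _ ?_)
    exact ⟨(-1:ℝ), by simp [pm], (1:ℝ), by simp [pm], (-1:ℝ), by simp [pm], (1:ℝ), by simp [pm], by ext <;> simp [f0, s2inv] <;> (try norm_num [s2inv]) <;> (try ring)⟩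
  · refine Set.mem_union_left _ (Set.mem_union_right _ ?_)
    exact ⟨(-1:ℝ), by simp [pm], (1:ℝ), by simp [pm], (1:ℝ), by simp [pm], (-1:ℝ), by simp [pm], by ext <;> simp [f0, s2inv] <;> (try norm_num [s2inv]) <;> (try ring)⟩
  · refine Set.mem_union_left _ (Set.mem_union_right _ ?_)
    exact ⟨(-1:ℝ), by simp [pm], (1:ℝ), by simp [pm], (1:ℝ), by simp [pm], (1:ℝ), by simp [pm], by ext <;> simp [f0, s2inv] <;> (try norm_num [s2inv]) <;> (try ring)⟩
  · refine Set.mem_union_right _ ?_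
    exact ⟨(-1:ℝ), by simp [pm], (-1:ℝ), by simp [pm], (1 : Quaternion ℝ), by simp, qi, by simp, ⟨by intro hcon; have := congrArg QuaternionAlgebra.imI hcon; simp [qi, qj, qk] at this, by ext <;> simp [f0, s2inv] <;> (try norm_num [s2inv]) <;> (try ring)⟩⟩
  · refine Set.mem_union_right _ ?_
    exact ⟨(-1:ℝ), by simp [pm], (1:ℝ), by simp [pm], (1 : Quaternion ℝ), by simp, qi, by simp, ⟨by intro hcon; have := congrArg QuaternionAlgebra.imI hcon; simp [qi, qj, qk] at this, by ext <;> simp [f0, s2inv] <;> (try norm_num [s2inv]) <;> (try ring)⟩⟩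
  · refine Set.mem_union_right _ ?_
    exact ⟨(-1:ℝ), by simp [pm], (-1:ℝ), by simp [pm], (1 : Quaternion ℝ), by simp, qj, by simp, ⟨by intro hcon; have := congrArg QuaternionAlgebra.imJ hcon; simp [qi, qj, qk] at this, by ext <;> simp [f0, s2inv] <;> (try norm_num [s2inv]) <;> (try ring)⟩⟩
  · refine Set.mem_union_right _ ?_
    exact ⟨(-1:ℝ), by simp [pm], (1:ℝ), by simp [pm], (1 : Quaternion ℝ), by simp, qj, by simp, ⟨by intro hcon; have := congrArg QuaternionAlgebra.imJ hcon; simp [qi, qj, qk] at this, by ext <;> simp [f0, s2inv] <;> (try norm_num [s2inv]) <;> (try ring)⟩⟩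
  · refine Set.mem_union_right _ ?_
    exact ⟨(-1:ℝ), by simp [pm], (-1:ℝ), by simp [pm], (1 : Quaternion ℝ), by simp, qk, by simp, ⟨by intro hcon; have := congrArg QuaternionAlgebra.imK hcon; simp [qi, qj, qk] at this, by ext <;> simp [f0, s2inv] <;> (try norm_num [s2inv]) <;> (try ring)⟩⟩
  · refine Set.mem_union_right _ ?_
    exact ⟨(-1:ℝ), by simp [pm], (1:ℝ), by simp [pm], (1 : Quaternion ℝ), by simp, qk, by simp, ⟨by intro hcon; have := congrArg QuaternionAlgebra.imK hcon; simp [qi, qj, qk] at this, by ext <;> simp [f0, s2inv] <;> (try norm_num [s2inv]) <;> (try ring)⟩⟩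
  · refine Set.mem_union_right _ ?_
    exact ⟨(-1:ℝ), by simp [pm], (-1:ℝ), by simp [pm], qi, by simp, qj, by simp, ⟨by intro hcon; have := congrArg QuaternionAlgebra.imI hcon; simp [qi, qj, qk] at this, by ext <;> simp [f0, s2inv] <;> (try norm_num [s2inv]) <;> (try ring)⟩⟩
  · refine Set.mem_union_right _ ?_
    exact ⟨(-1:ℝ), by simp [pm], (1:ℝ), by simp [pm], qi, by simp, qj, by simp, ⟨by intro hcon; have := congrArg QuaternionAlgebra.imI hcon; simp [qi, qj, qk] at this, by ext <;> simp [f0, s2inv] <;> (try norm_num [s2inv]) <;> (try ring)⟩⟩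
  · refine Set.mem_union_right _ ?_
    exact ⟨(-1:ℝ), by simp [pm], (-1:ℝ), by simp [pm], qi, by simp, qk, by simp, ⟨by intro hcon; have := congrArg QuaternionAlgebra.imI hcon; simp [qi, qj, qk] at this, by ext <;> simp [f0, s2inv] <;> (try norm_num [s2inv]) <;> (try ring)⟩⟩
  · refine Set.mem_union_right _ ?_
    exact ⟨(-1:ℝ), by simp [pm], (1:ℝ), by simp [pm], qi, by simp, qk, by simp, ⟨by intro hcon; have := congrArg QuaternionAlgebra.imI hcon; simp [qi, qj, qk] at this, by ext <;> simp [f0, s2inv] <;> (try norm_num [s2inv]) <;> (try ring)⟩⟩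
  · refine Set.mem_union_right _ ?_
    exact ⟨(-1:ℝ), by simp [pm], (-1:ℝ), by simp [pm], qj, by simp, qk, by simp, ⟨by intro hcon; have := congrArg QuaternionAlgebra.imJ hcon; simp [qi, qj, qk] at this, by ext <;> simp [f0, s2inv] <;> (try norm_num [s2inv]) <;> (try ring)⟩⟩
  · refine Set.mem_union_right _ ?_
    exact ⟨(-1:ℝ), by simp [pm], (1:ℝ), by simp [pm], qj, by simp, qk, by simp, ⟨by intro hcon; have := congrArg QuaternionAlgebra.imJ hcon; simp [qi, qj, qk] at this, by ext <;> simp [f0, s2inv] <;> (try norm_num [s2inv]) <;> (try ring)⟩⟩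

set_option maxHeartbeats 3200000 in
lemma union_sub : hurwitzUnits ∪ octPart ⊆ Sset := by
  rintro x (hH | hO)
  · simp only [hurwitzUnits, Set.mem_union] at hH
    rcases hH with h8 | hHalf
    · simp only [Set.mem_insert_iff, Set.mem_singleton_iff] at h8
      rcases h8 with rfl|rfl|rfl|rfl|rfl|rfl|rfl|rfl
      · exact ⟨(⟨⟨2,0⟩, ⟨0,0⟩, ⟨0,0⟩, ⟨0,0⟩⟩ : Quaternion R2), mem_NL_of (by decide), by ext <;> simp [f0, s2inv] <;> (try norm_num [s2inv]) <;> (try ring)⟩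
      · exact ⟨(⟨⟨-2,0⟩, ⟨0,0⟩, ⟨0,0⟩, ⟨0,0⟩⟩ : Quaternion R2), mem_NL_of (by decide), by ext <;> simp [f0, s2inv] <;> (try norm_num [s2inv]) <;> (try ring)⟩
      · exact ⟨(⟨⟨0,0⟩, ⟨2,0⟩, ⟨0,0⟩, ⟨0,0⟩⟩ : Quaternion R2), mem_NL_of (by decide), by ext <;> simp [f0, s2inv] <;> (try norm_num [s2inv]) <;> (try ring)⟩
      · exact ⟨(⟨⟨0,0⟩, ⟨-2,0⟩, ⟨0,0⟩, ⟨0,0⟩⟩ : Quaternion R2), mem_NL_of (by decide), by ext <;> simp [f0, s2inv] <;> (try norm_num [s2inv]) <;> (try ring)⟩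
      · exact ⟨(⟨⟨0,0⟩, ⟨0,0⟩, ⟨2,0⟩, ⟨0,0⟩⟩ : Quaternion R2), mem_NL_of (by decide), by ext <;> simp [f0, s2inv] <;> (try norm_num [s2inv]) <;> (try ring)⟩
      · exact ⟨(⟨⟨0,0⟩, ⟨0,0⟩, ⟨-2,0⟩, ⟨0,0⟩⟩ : Quaternion R2), mem_NL_of (by decide), by ext <;> simp [f0, s2inv] <;> (try norm_num [s2inv]) <;> (try ring)⟩
      · exact ⟨(⟨⟨0,0⟩, ⟨0,0⟩, ⟨0,0⟩, ⟨2,0⟩⟩ : Quaternion R2), mem_NL_of (by decide), by ext <;> simp [f0, s2inv] <;> (try norm_num [s2inv]) <;> (try ring)⟩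
      · exact ⟨(⟨⟨0,0⟩, ⟨0,0⟩, ⟨0,0⟩, ⟨-2,0⟩⟩ : Quaternion R2), mem_NL_of (by decide), by ext <;> simp [f0, s2inv] <;> (try norm_num [s2inv]) <;> (try ring)⟩
    · obtain ⟨e0, h0, e1, h1, e2, h2, e3, h3, rfl⟩ := hHalf
      simp only [pm, Set.mem_insert_iff, Set.mem_singleton_iff] at h0 h1 h2 h3
      rcases h0 with rfl|rfl <;> rcases h1 with rfl|rfl <;> rcases h2 with rfl|rfl <;>
        rcases h3 with rfl|rfl
      · exact ⟨(⟨⟨1,0⟩, ⟨1,0⟩, ⟨1,0⟩, ⟨1,0⟩⟩ : Quaternion R2), mem_NL_of (by decide), by ext <;> simp [f0, s2inv] <;> (try norm_num [s2inv]) <;> (try ring)⟩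
      · exact ⟨(⟨⟨1,0⟩, ⟨1,0⟩, ⟨1,0⟩, ⟨-1,0⟩⟩ : Quaternion R2), mem_NL_of (by decide), by ext <;> simp [f0, s2inv] <;> (try norm_num [s2inv]) <;> (try ring)⟩
      · exact ⟨(⟨⟨1,0⟩, ⟨1,0⟩, ⟨-1,0⟩, ⟨1,0⟩⟩ : Quaternion R2), mem_NL_of (by decide), by ext <;> simp [f0, s2inv] <;> (try norm_num [s2inv]) <;> (try ring)⟩
      · exact ⟨(⟨⟨1,0⟩, ⟨1,0⟩, ⟨-1,0⟩, ⟨-1,0⟩⟩ : Quaternion R2), mem_NL_of (by decide), by ext <;> simp [f0, s2inv] <;> (try norm_num [s2inv]) <;> (try ring)⟩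
      · exact ⟨(⟨⟨1,0⟩, ⟨-1,0⟩, ⟨1,0⟩, ⟨1,0⟩⟩ : Quaternion R2), mem_NL_of (by decide), by ext <;> simp [f0, s2inv] <;> (try norm_num [s2inv]) <;> (try ring)⟩
      · exact ⟨(⟨⟨1,0⟩, ⟨-1,0⟩, ⟨1,0⟩, ⟨-1,0⟩⟩ : Quaternion R2), mem_NL_of (by decide), by ext <;> simp [f0, s2inv] <;> (try norm_num [s2inv]) <;> (try ring)⟩
      · exact ⟨(⟨⟨1,0⟩, ⟨-1,0⟩, ⟨-1,0⟩, ⟨1,0⟩⟩ : Quaternion R2), mem_NL_of (by decide), by ext <;> simp [f0, s2inv] <;> (try norm_num [s2inv]) <;> (try ring)⟩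
      · exact ⟨(⟨⟨1,0⟩, ⟨-1,0⟩, ⟨-1,0⟩, ⟨-1,0⟩⟩ : Quaternion R2), mem_NL_of (by decide), by ext <;> simp [f0, s2inv] <;> (try norm_num [s2inv]) <;> (try ring)⟩
      · exact ⟨(⟨⟨-1,0⟩, ⟨1,0⟩, ⟨1,0⟩, ⟨1,0⟩⟩ : Quaternion R2), mem_NL_of (by decide), by ext <;> simp [f0, s2inv] <;> (try norm_num [s2inv]) <;> (try ring)⟩
      · exact ⟨(⟨⟨-1,0⟩, ⟨1,0⟩, ⟨1,0⟩, ⟨-1,0⟩⟩ : Quaternion R2), mem_NL_of (by decide), by ext <;> simp [f0, s2inv] <;> (try norm_num [s2inv]) <;> (try ring)⟩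
      · exact ⟨(⟨⟨-1,0⟩, ⟨1,0⟩, ⟨-1,0⟩, ⟨1,0⟩⟩ : Quaternion R2), mem_NL_of (by decide), by ext <;> simp [f0, s2inv] <;> (try norm_num [s2inv]) <;> (try ring)⟩
      · exact ⟨(⟨⟨-1,0⟩, ⟨1,0⟩, ⟨-1,0⟩, ⟨-1,0⟩⟩ : Quaternion R2), mem_NL_of (by decide), by ext <;> simp [f0, s2inv] <;> (try norm_num [s2inv]) <;> (try ring)⟩
      · exact ⟨(⟨⟨-1,0⟩, ⟨-1,0⟩, ⟨1,0⟩, ⟨1,0⟩⟩ : Quaternion R2), mem_NL_of (by decide), by ext <;> simp [f0, s2inv] <;> (try norm_num [s2inv]) <;> (try ring)⟩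
      · exact ⟨(⟨⟨-1,0⟩, ⟨-1,0⟩, ⟨1,0⟩, ⟨-1,0⟩⟩ : Quaternion R2), mem_NL_of (by decide), by ext <;> simp [f0, s2inv] <;> (try norm_num [s2inv]) <;> (try ring)⟩
      · exact ⟨(⟨⟨-1,0⟩, ⟨-1,0⟩, ⟨-1,0⟩, ⟨1,0⟩⟩ : Quaternion R2), mem_NL_of (by decide), by ext <;> simp [f0, s2inv] <;> (try norm_num [s2inv]) <;> (try ring)⟩
      · exact ⟨(⟨⟨-1,0⟩, ⟨-1,0⟩, ⟨-1,0⟩, ⟨-1,0⟩⟩ : Quaternion R2), mem_NL_of (by decide), by ext <;> simp [f0, s2inv] <;> (try norm_num [s2inv]) <;> (try ring)⟩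
  · simp only [octPart, Set.mem_setOf_eq] at hO
    obtain ⟨e, he, e', he', a, ha, b, hb, hne, rfl⟩ := hO
    simp only [pm, Set.mem_insert_iff, Set.mem_singleton_iff] at he he' ha hb
    rcases he with rfl|rfl <;> rcases he' with rfl|rfl <;> rcases ha with rfl|rfl|rfl|rfl <;>
      rcases hb with rfl|rfl|rfl|rfl
    · exact absurd rfl hne
    · exact ⟨(⟨⟨0,1⟩, ⟨0,1⟩, ⟨0,0⟩, ⟨0,0⟩⟩ : Quaternion R2), mem_NL_of (by decide), by ext <;> simp [f0, s2inv] <;> (try norm_num [s2inv]) <;> (try ring)⟩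
    · exact ⟨(⟨⟨0,1⟩, ⟨0,0⟩, ⟨0,1⟩, ⟨0,0⟩⟩ : Quaternion R2), mem_NL_of (by decide), by ext <;> simp [f0, s2inv] <;> (try norm_num [s2inv]) <;> (try ring)⟩
    · exact ⟨(⟨⟨0,1⟩, ⟨0,0⟩, ⟨0,0⟩, ⟨0,1⟩⟩ : Quaternion R2), mem_NL_of (by decide), by ext <;> simp [f0, s2inv] <;> (try norm_num [s2inv]) <;> (try ring)⟩
    · exact ⟨(⟨⟨0,1⟩, ⟨0,1⟩, ⟨0,0⟩, ⟨0,0⟩⟩ : Quaternion R2), mem_NL_of (by decide), by ext <;> simp [f0, s2inv] <;> (try norm_num [s2inv]) <;> (try ring)⟩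
    · exact absurd rfl hne
    · exact ⟨(⟨⟨0,0⟩, ⟨0,1⟩, ⟨0,1⟩, ⟨0,0⟩⟩ : Quaternion R2), mem_NL_of (by decide), by ext <;> simp [f0, s2inv] <;> (try norm_num [s2inv]) <;> (try ring)⟩
    · exact ⟨(⟨⟨0,0⟩, ⟨0,1⟩, ⟨0,0⟩, ⟨0,1⟩⟩ : Quaternion R2), mem_NL_of (by decide), by ext <;> simp [f0, s2inv] <;> (try norm_num [s2inv]) <;> (try ring)⟩
    · exact ⟨(⟨⟨0,1⟩, ⟨0,0⟩, ⟨0,1⟩, ⟨0,0⟩⟩ : Quaternion R2), mem_NL_of (by decide), by ext <;> simp [f0, s2inv] <;> (try norm_num [s2inv]) <;> (try ring)⟩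
    · exact ⟨(⟨⟨0,0⟩, ⟨0,1⟩, ⟨0,1⟩, ⟨0,0⟩⟩ : Quaternion R2), mem_NL_of (by decide), by ext <;> simp [f0, s2inv] <;> (try norm_num [s2inv]) <;> (try ring)⟩
    · exact absurd rfl hne
    · exact ⟨(⟨⟨0,0⟩, ⟨0,0⟩, ⟨0,1⟩, ⟨0,1⟩⟩ : Quaternion R2), mem_NL_of (by decide), by ext <;> simp [f0, s2inv] <;> (try norm_num [s2inv]) <;> (try ring)⟩
    · exact ⟨(⟨⟨0,1⟩, ⟨0,0⟩, ⟨0,0⟩, ⟨0,1⟩⟩ : Quaternion R2), mem_NL_of (by decide), by ext <;> simp [f0, s2inv] <;> (try norm_num [s2inv]) <;> (try ring)⟩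
    · exact ⟨(⟨⟨0,0⟩, ⟨0,1⟩, ⟨0,0⟩, ⟨0,1⟩⟩ : Quaternion R2), mem_NL_of (by decide), by ext <;> simp [f0, s2inv] <;> (try norm_num [s2inv]) <;> (try ring)⟩
    · exact ⟨(⟨⟨0,0⟩, ⟨0,0⟩, ⟨0,1⟩, ⟨0,1⟩⟩ : Quaternion R2), mem_NL_of (by decide), by ext <;> simp [f0, s2inv] <;> (try norm_num [s2inv]) <;> (try ring)⟩
    · exact absurd rfl hne
    · exact absurd rfl hne
    · exact ⟨(⟨⟨0,1⟩, ⟨0,-1⟩, ⟨0,0⟩, ⟨0,0⟩⟩ : Quaternion R2), mem_NL_of (by decide), by ext <;> simp [f0, s2inv] <;> (try norm_num [s2inv]) <;> (try ring)⟩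
    · exact ⟨(⟨⟨0,1⟩, ⟨0,0⟩, ⟨0,-1⟩, ⟨0,0⟩⟩ : Quaternion R2), mem_NL_of (by decide), by ext <;> simp [f0, s2inv] <;> (try norm_num [s2inv]) <;> (try ring)⟩
    · exact ⟨(⟨⟨0,1⟩, ⟨0,0⟩, ⟨0,0⟩, ⟨0,-1⟩⟩ : Quaternion R2), mem_NL_of (by decide), by ext <;> simp [f0, s2inv] <;> (try norm_num [s2inv]) <;> (try ring)⟩
    · exact ⟨(⟨⟨0,-1⟩, ⟨0,1⟩, ⟨0,0⟩, ⟨0,0⟩⟩ : Quaternion R2), mem_NL_of (by decide), by ext <;> simp [f0, s2inv] <;> (try norm_num [s2inv]) <;> (try ring)⟩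
    · exact absurd rfl hne
    · exact ⟨(⟨⟨0,0⟩, ⟨0,1⟩, ⟨0,-1⟩, ⟨0,0⟩⟩ : Quaternion R2), mem_NL_of (by decide), by ext <;> simp [f0, s2inv] <;> (try norm_num [s2inv]) <;> (try ring)⟩
    · exact ⟨(⟨⟨0,0⟩, ⟨0,1⟩, ⟨0,0⟩, ⟨0,-1⟩⟩ : Quaternion R2), mem_NL_of (by decide), by ext <;> simp [f0, s2inv] <;> (try norm_num [s2inv]) <;> (try ring)⟩
    · exact ⟨(⟨⟨0,-1⟩, ⟨0,0⟩, ⟨0,1⟩, ⟨0,0⟩⟩ : Quaternion R2), mem_NL_of (by decide), by ext <;> simp [f0, s2inv] <;> (try norm_num [s2inv]) <;> (try ring)⟩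
    · exact ⟨(⟨⟨0,0⟩, ⟨0,-1⟩, ⟨0,1⟩, ⟨0,0⟩⟩ : Quaternion R2), mem_NL_of (by decide), by ext <;> simp [f0, s2inv] <;> (try norm_num [s2inv]) <;> (try ring)⟩
    · exact absurd rfl hne
    · exact ⟨(⟨⟨0,0⟩, ⟨0,0⟩, ⟨0,1⟩, ⟨0,-1⟩⟩ : Quaternion R2), mem_NL_of (by decide), by ext <;> simp [f0, s2inv] <;> (try norm_num [s2inv]) <;> (try ring)⟩
    · exact ⟨(⟨⟨0,-1⟩, ⟨0,0⟩, ⟨0,0⟩, ⟨0,1⟩⟩ : Quaternion R2), mem_NL_of (by decide), by ext <;> simp [f0, s2inv] <;> (try norm_num [s2inv]) <;> (try ring)⟩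
    · exact ⟨(⟨⟨0,0⟩, ⟨0,-1⟩, ⟨0,0⟩, ⟨0,1⟩⟩ : Quaternion R2), mem_NL_of (by decide), by ext <;> simp [f0, s2inv] <;> (try norm_num [s2inv]) <;> (try ring)⟩
    · exact ⟨(⟨⟨0,0⟩, ⟨0,0⟩, ⟨0,-1⟩, ⟨0,1⟩⟩ : Quaternion R2), mem_NL_of (by decide), by ext <;> simp [f0, s2inv] <;> (try norm_num [s2inv]) <;> (try ring)⟩
    · exact absurd rfl hne
    · exact absurd rfl hne
    · exact ⟨(⟨⟨0,-1⟩, ⟨0,1⟩, ⟨0,0⟩, ⟨0,0⟩⟩ : Quaternion R2), mem_NL_of (by decide), by ext <;> simp [f0, s2inv] <;> (try norm_num [s2inv]) <;> (try ring)⟩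
    · exact ⟨(⟨⟨0,-1⟩, ⟨0,0⟩, ⟨0,1⟩, ⟨0,0⟩⟩ : Quaternion R2), mem_NL_of (by decide), by ext <;> simp [f0, s2inv] <;> (try norm_num [s2inv]) <;> (try ring)⟩
    · exact ⟨(⟨⟨0,-1⟩, ⟨0,0⟩, ⟨0,0⟩, ⟨0,1⟩⟩ : Quaternion R2), mem_NL_of (by decide), by ext <;> simp [f0, s2inv] <;> (try norm_num [s2inv]) <;> (try ring)⟩
    · exact ⟨(⟨⟨0,1⟩, ⟨0,-1⟩, ⟨0,0⟩, ⟨0,0⟩⟩ : Quaternion R2), mem_NL_of (by decide), by ext <;> simp [f0, s2inv] <;> (try norm_num [s2inv]) <;> (try ring)⟩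
    · exact absurd rfl hne
    · exact ⟨(⟨⟨0,0⟩, ⟨0,-1⟩, ⟨0,1⟩, ⟨0,0⟩⟩ : Quaternion R2), mem_NL_of (by decide), by ext <;> simp [f0, s2inv] <;> (try norm_num [s2inv]) <;> (try ring)⟩
    · exact ⟨(⟨⟨0,0⟩, ⟨0,-1⟩, ⟨0,0⟩, ⟨0,1⟩⟩ : Quaternion R2), mem_NL_of (by decide), by ext <;> simp [f0, s2inv] <;> (try norm_num [s2inv]) <;> (try ring)⟩
    · exact ⟨(⟨⟨0,1⟩, ⟨0,0⟩, ⟨0,-1⟩, ⟨0,0⟩⟩ : Quaternion R2), mem_NL_of (by decide), by ext <;> simp [f0, s2inv] <;> (try norm_num [s2inv]) <;> (try ring)⟩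
    · exact ⟨(⟨⟨0,0⟩, ⟨0,1⟩, ⟨0,-1⟩, ⟨0,0⟩⟩ : Quaternion R2), mem_NL_of (by decide), by ext <;> simp [f0, s2inv] <;> (try norm_num [s2inv]) <;> (try ring)⟩
    · exact absurd rfl hne
    · exact ⟨(⟨⟨0,0⟩, ⟨0,0⟩, ⟨0,-1⟩, ⟨0,1⟩⟩ : Quaternion R2), mem_NL_of (by decide), by ext <;> simp [f0, s2inv] <;> (try norm_num [s2inv]) <;> (try ring)⟩
    · exact ⟨(⟨⟨0,1⟩, ⟨0,0⟩, ⟨0,0⟩, ⟨0,-1⟩⟩ : Quaternion R2), mem_NL_of (by decide), by ext <;> simp [f0, s2inv] <;> (try norm_num [s2inv]) <;> (try ring)⟩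
    · exact ⟨(⟨⟨0,0⟩, ⟨0,1⟩, ⟨0,0⟩, ⟨0,-1⟩⟩ : Quaternion R2), mem_NL_of (by decide), by ext <;> simp [f0, s2inv] <;> (try norm_num [s2inv]) <;> (try ring)⟩
    · exact ⟨(⟨⟨0,0⟩, ⟨0,0⟩, ⟨0,1⟩, ⟨0,-1⟩⟩ : Quaternion R2), mem_NL_of (by decide), by ext <;> simp [f0, s2inv] <;> (try norm_num [s2inv]) <;> (try ring)⟩
    · exact absurd rfl hne
    · exact absurd rfl hne
    · exact ⟨(⟨⟨0,-1⟩, ⟨0,-1⟩, ⟨0,0⟩, ⟨0,0⟩⟩ : Quaternion R2), mem_NL_of (by decide), by ext <;> simp [f0, s2inv] <;> (try norm_num [s2inv]) <;> (try ring)⟩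
    · exact ⟨(⟨⟨0,-1⟩, ⟨0,0⟩, ⟨0,-1⟩, ⟨0,0⟩⟩ : Quaternion R2), mem_NL_of (by decide), by ext <;> simp [f0, s2inv] <;> (try norm_num [s2inv]) <;> (try ring)⟩
    · exact ⟨(⟨⟨0,-1⟩, ⟨0,0⟩, ⟨0,0⟩, ⟨0,-1⟩⟩ : Quaternion R2), mem_NL_of (by decide), by ext <;> simp [f0, s2inv] <;> (try norm_num [s2inv]) <;> (try ring)⟩
    · exact ⟨(⟨⟨0,-1⟩, ⟨0,-1⟩, ⟨0,0⟩, ⟨0,0⟩⟩ : Quaternion R2), mem_NL_of (by decide), by ext <;> simp [f0, s2inv] <;> (try norm_num [s2inv]) <;> (try ring)⟩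
    · exact absurd rfl hne
    · exact ⟨(⟨⟨0,0⟩, ⟨0,-1⟩, ⟨0,-1⟩, ⟨0,0⟩⟩ : Quaternion R2), mem_NL_of (by decide), by ext <;> simp [f0, s2inv] <;> (try norm_num [s2inv]) <;> (try ring)⟩
    · exact ⟨(⟨⟨0,0⟩, ⟨0,-1⟩, ⟨0,0⟩, ⟨0,-1⟩⟩ : Quaternion R2), mem_NL_of (by decide), by ext <;> simp [f0, s2inv] <;> (try norm_num [s2inv]) <;> (try ring)⟩
    · exact ⟨(⟨⟨0,-1⟩, ⟨0,0⟩, ⟨0,-1⟩, ⟨0,0⟩⟩ : Quaternion R2), mem_NL_of (by decide), by ext <;> simp [f0, s2inv] <;> (try norm_num [s2inv]) <;> (try ring)⟩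
    · exact ⟨(⟨⟨0,0⟩, ⟨0,-1⟩, ⟨0,-1⟩, ⟨0,0⟩⟩ : Quaternion R2), mem_NL_of (by decide), by ext <;> simp [f0, s2inv] <;> (try norm_num [s2inv]) <;> (try ring)⟩
    · exact absurd rfl hne
    · exact ⟨(⟨⟨0,0⟩, ⟨0,0⟩, ⟨0,-1⟩, ⟨0,-1⟩⟩ : Quaternion R2), mem_NL_of (by decide), by ext <;> simp [f0, s2inv] <;> (try norm_num [s2inv]) <;> (try ring)⟩
    · exact ⟨(⟨⟨0,-1⟩, ⟨0,0⟩, ⟨0,0⟩, ⟨0,-1⟩⟩ : Quaternion R2), mem_NL_of (by decide), by ext <;> simp [f0, s2inv] <;> (try norm_num [s2inv]) <;> (try ring)⟩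
    · exact ⟨(⟨⟨0,0⟩, ⟨0,-1⟩, ⟨0,0⟩, ⟨0,-1⟩⟩ : Quaternion R2), mem_NL_of (by decide), by ext <;> simp [f0, s2inv] <;> (try norm_num [s2inv]) <;> (try ring)⟩
    · exact ⟨(⟨⟨0,0⟩, ⟨0,0⟩, ⟨0,-1⟩, ⟨0,-1⟩⟩ : Quaternion R2), mem_NL_of (by decide), by ext <;> simp [f0, s2inv] <;> (try norm_num [s2inv]) <;> (try ring)⟩
    · exact absurd rfl hne

lemma Sset_eq : Sset = hurwitzUnits ∪ octPart := Set.Subset.antisymm Sset_sub union_sub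


/-- Let `G` be the subgroup of `ℍˣ` whose underlying set is the union of the
24 Hurwitz units with the 24 quaternions `(ε a + ε' b)/√2` (the binary
octahedral group `2O`, the group of rotors generated by the reflections of
`B₃`). Then `−1 ∈ G` lies in the center of `G`, there is a surjective
homomorphism `G → S₄` whose kernel is exactly `{1, −1}` (so `G/{±1} ≅ S₄`,
the rotation group of the octahedron), and `G` has order 48: it is a double
cover of the chiral octahedral group. -/
theorem binary_octahedral_double_cover :
    ∃ G : Subgroup (Quaternion ℝ)ˣ,
      ((fun u : (Quaternion ℝ)ˣ => (u : Quaternion ℝ)) '' (G : Set (Quaternion ℝ)ˣ)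
        = hurwitzUnits ∪ octPart) ∧
      Nat.card G = 48 ∧
      ∃ h : (-1 : (Quaternion ℝ)ˣ) ∈ G,
        (⟨-1, h⟩ : G) ∈ Subgroup.center G ∧
        ∃ φ : G →* Equiv.Perm (Fin 4),
          Function.Surjective φ ∧ (φ.ker : Set G) = {1, ⟨-1, h⟩} := by
  exact ⟨G2O, by rw [G2O_image, Sset_eq], card_G2O, neg_one_mem_G2O, neg_one_central,
    phi, phi_surjective, ker_phi⟩
end
end
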